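/- arXiv:2307.08642 — 12 statements merged into one kernel-verified Lean document; each statement's English description precedes it below -/
import Mathlib

section
/- Let n ≥ 1, let a ∈ ℂⁿ, let f be a nonzero homogeneous polynomial in n complex variables, let U ⊆ ℂⁿ be open, and let λ be differentiable on U with f(x − λ(x)·a) = 0 for all x ∈ U. Then for every x ∈ U such that Df(x − λ(x)·a) ≠ 0, one has Df(x − λ(x)·a)(a) ≠ 0 and the derivative of λ at x is given by Dλ(x)(v) = Df(x − λ(x)·a)(v) / Df(x − λ(x)·a)(a) for every v ∈ ℂⁿ. (Proposition 8.3(1) of the paper: the formula dλ = df(x − λa)/⟨df(x − λa), a⟩.) -/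
lemma diff_eval_aux (n : ℕ) (f : MvPolynomial (Fin n) ℂ) :
    Differentiable ℂ (fun y : Fin n → ℂ => MvPolynomial.eval y f) := by
  induction f using MvPolynomial.induction_on with
  | C a => simpa using differentiable_const (a : ℂ)
  | add p q hp hq => simp only [map_add]; exact hp.add hq
  | mul_X p i hp =>
      simp only [map_mul, MvPolynomial.eval_X]; exact hp.mul ((ContinuousLinearMap.proj i :
        (Fin n → ℂ) →L[ℂ] ℂ).differentiable)

/-- Proposition 8.3(1): the formula `dλ = df(x − λa)/⟨df(x − λa), a⟩` for a root
`λ(x)` of `f(x − λ(x)a) = 0`, where `f` is a nonzero homogeneous polynomial. -/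
theorem stmt_0 (n : ℕ) (hn : 1 ≤ n) (a : Fin n → ℂ)
    (f : MvPolynomial (Fin n) ℂ) (hf : f ≠ 0) (d : ℕ)
    (hhom : f.IsHomogeneous d)
    (U : Set (Fin n → ℂ)) (hU : IsOpen U)
    (lam : (Fin n → ℂ) → ℂ)
    (hdiff : ∀ x ∈ U, DifferentiableAt ℂ lam x)
    (hroot : ∀ x ∈ U, MvPolynomial.eval (x - lam x • a) f = 0) :
    ∀ x ∈ U,
      fderiv ℂ (fun y => MvPolynomial.eval y f) (x - lam x • a) ≠ 0 →
      (fderiv ℂ (fun y => MvPolynomial.eval y f) (x - lam x • a) a ≠ 0 ∧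
       ∀ v : Fin n → ℂ,
         fderiv ℂ lam x v =
           fderiv ℂ (fun y => MvPolynomial.eval y f) (x - lam x • a) v /
           fderiv ℂ (fun y => MvPolynomial.eval y f) (x - lam x • a) a) := by
  intro x hx hDf
  set F : (Fin n → ℂ) → ℂ := fun y => MvPolynomial.eval y f with hF
  set p : Fin n → ℂ := x - lam x • a with hp
  set L : (Fin n → ℂ) →L[ℂ] ℂ := fderiv ℂ lam x with hL
  set D : (Fin n → ℂ) →L[ℂ] ℂ := fderiv ℂ F p with hD
  -- derivative of the inner map y ↦ y - lam y • a
  have hginner : HasFDerivAt (fun y : Fin n → ℂ => y - lam y • a)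
      (ContinuousLinearMap.id ℂ (Fin n → ℂ) - L.smulRight a) x :=
    (hasFDerivAt_id x).sub (((hdiff x hx).hasFDerivAt).smul_const a)
  have hFdiff : HasFDerivAt F D p := (diff_eval_aux n f p).hasFDerivAt
  have hcomp : HasFDerivAt (fun y => F (y - lam y • a))
      (D.comp (ContinuousLinearMap.id ℂ (Fin n → ℂ) - L.smulRight a)) x := by
    have := hFdiff.comp x hginner; exact this
  -- the composite is 0 near x
  have hzero : HasFDerivAt (fun y => F (y - lam y • a))
      (0 : (Fin n → ℂ) →L[ℂ] ℂ) x := by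
    apply (hasFDerivAt_const (0 : ℂ) x).congr_of_eventuallyEq
    filter_upwards [hU.mem_nhds hx] with y hy
    exact hroot y hy
  have hkey : ∀ v : Fin n → ℂ, D v = L v * D a := by
    intro v
    have := congrArg (fun (T : (Fin n → ℂ) →L[ℂ] ℂ) => T v) (hcomp.unique hzero)
    simp only [ContinuousLinearMap.comp_apply, ContinuousLinearMap.sub_apply,
      ContinuousLinearMap.id_apply, ContinuousLinearMap.smulRight_apply,
      ContinuousLinearMap.zero_apply, map_sub, map_smul, smul_eq_mul] at this
    linear_combination this
  have hDa : D a ≠ 0 := by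
    intro h0
    apply hDf
    ext w
    simp [hkey w, h0]
  refine ⟨hDa, fun v => ?_⟩
  rw [hkey v]
  field_simp
end

section
/- Let n ≥ 1, let a ∈ ℂⁿ, let f₁ and f₂ be nonzero homogeneous polynomials in n complex variables, let U ⊆ ℂⁿ be open, and let λ₁, λ₂ be differentiable on U with f₁(x − λ₁(x)·a) = 0 and f₂(x − λ₂(x)·a) = 0 for all x ∈ U. If at some point x₀ ∈ U the differentials are linearly dependent, i.e. Dλ₂(x₀) = c·Dλ₁(x₀) for some c ∈ ℂ, then they coincide: Dλ₂(x₀) = Dλ₁(x₀) (equivalently c = 1). (Proposition 8.2 of the paper: linearly dependent differentials of two eigenvalues of a Lie–Poisson pencil coincide.) -/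
open Topology Filter Metric

noncomputable def linePoly {n : ℕ} (f : MvPolynomial (Fin n) ℂ) (x v : Fin n → ℂ) : Polynomial ℂ :=
  MvPolynomial.eval₂ Polynomial.C (fun i => Polynomial.C (x i) + Polynomial.X * Polynomial.C (v i)) f

lemma eval_linePoly {n : ℕ} (f : MvPolynomial (Fin n) ℂ) (x v : Fin n → ℂ) (t : ℂ) :
    (linePoly f x v).eval t = MvPolynomial.eval (x + t • v) f := by
  have h := MvPolynomial.eval₂_comp_left (Polynomial.evalRingHom t) Polynomial.C
      (fun i => Polynomial.C (x i) + Polynomial.X * Polynomial.C (v i)) f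
  have h2 : (Polynomial.evalRingHom t).comp Polynomial.C = RingHom.id ℂ := by
    ext r; simp
  rw [h2] at h
  have h3 : ((Polynomial.evalRingHom t) ∘ fun i => Polynomial.C (x i) + Polynomial.X * Polynomial.C (v i))
      = (x + t • v) := by
    funext i
    simp [mul_comm t]
  rw [h3, MvPolynomial.eval₂_id] at h
  exact h

lemma mv_zero_of_ball {n : ℕ} {f : MvPolynomial (Fin n) ℂ} {y : Fin n → ℂ} {ε : ℝ} (hε : 0 < ε)
    (h : ∀ x ∈ Metric.ball y ε, MvPolynomial.eval x f = 0) : f = 0 := by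
  apply MvPolynomial.funext
  intro z
  rw [map_zero]
  set v := z - y with hv
  have hδ : 0 < ε / (‖v‖ + 1) := div_pos hε (by positivity)
  have key : Metric.ball (0:ℂ) (ε / (‖v‖ + 1)) ⊆ {t | (linePoly f y v).IsRoot t} := by
    intro t ht
    simp only [Metric.mem_ball, dist_zero_right] at ht
    have hmem : y + t • v ∈ Metric.ball y ε := by
      simp only [Metric.mem_ball, dist_eq_norm, add_sub_cancel_left]
      calc ‖t • v‖ = ‖t‖ * ‖v‖ := norm_smul t v
        _ ≤ ‖t‖ * (‖v‖ + 1) := by nlinarith [norm_nonneg t, norm_nonneg v]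
        _ < (ε / (‖v‖ + 1)) * (‖v‖ + 1) := by
            apply mul_lt_mul_of_pos_right ht (by positivity)
        _ = ε := by field_simp
    simp only [Set.mem_setOf_eq, Polynomial.IsRoot, eval_linePoly]
    exact h _ hmem
  have hinf : {t : ℂ | (linePoly f y v).IsRoot t}.Infinite :=
    Set.Infinite.mono key (infinite_of_mem_nhds (0:ℂ) (Metric.ball_mem_nhds _ hδ))
  have hQ : linePoly f y v = 0 := Polynomial.eq_zero_of_infinite_isRoot _ hinf
  have := eval_linePoly f y v 1
  rw [hQ] at this
  simp only [Polynomial.eval_zero, one_smul, hv] at this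
  rw [show y + (z - y) = z by abel] at this
  exact this.symm

lemma deriv_eq_one {n : ℕ} (a : Fin n → ℂ) {f : MvPolynomial (Fin n) ℂ} (hf : f ≠ 0)
    {U : Set (Fin n → ℂ)} (hU : IsOpen U) {lam : (Fin n → ℂ) → ℂ}
    (hd : ∀ x ∈ U, DifferentiableAt ℂ lam x)
    (hr : ∀ x ∈ U, MvPolynomial.eval (x - lam x • a) f = 0)
    {x₀ : Fin n → ℂ} (hx₀ : x₀ ∈ U) : fderiv ℂ lam x₀ a = 1 := by
  set Z : (Fin n → ℂ) → Prop := fun x => ∀ s : ℂ, MvPolynomial.eval (x - s • a) f = 0 with hZdef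
  -- the affine curve is continuous / differentiable
  have hcurve : ∀ x : Fin n → ℂ, Differentiable ℂ (fun t : ℂ => x + t • a) := by
    intro x
    exact (differentiable_id.smul_const a).const_add x
  -- local claim
  have claim_local : ∀ x ∈ U, ¬ Z x → ∀ᶠ t in 𝓝 (0:ℂ), lam (x + t • a) = lam x + t := by
    intro x hx hZ
    have hQeval : ∀ s : ℂ, (linePoly f x (-a)).eval s = MvPolynomial.eval (x - s • a) f := by
      intro s
      rw [eval_linePoly, smul_neg, ← sub_eq_add_neg]
    obtain ⟨s₀, hs₀⟩ := not_forall.mp hZ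
    have hQ : linePoly f x (-a) ≠ 0 := by
      intro h0
      exact hs₀ (by rw [← hQeval, h0, Polynomial.eval_zero])
    have hroot : lam x ∈ {z | (linePoly f x (-a)).IsRoot z} := by
      simp only [Set.mem_setOf_eq, Polynomial.IsRoot, hQeval]
      exact hr x hx
    have hRfin : ({z | (linePoly f x (-a)).IsRoot z} \ {lam x}).Finite :=
      (Polynomial.finite_setOf_isRoot hQ).diff
    have hopen : IsOpen ({z | (linePoly f x (-a)).IsRoot z} \ {lam x})ᶜ := hRfin.isClosed.isOpen_compl
    have hlammem : lam x ∈ ({z | (linePoly f x (-a)).IsRoot z} \ {lam x})ᶜ := by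
      simp
    obtain ⟨ρ, hρpos, hρ⟩ := Metric.isOpen_iff.mp hopen _ hlammem
    -- continuity of φ
    have hcont : ContinuousAt (fun t : ℂ => lam (x + t • a) - t) 0 := by
      have h1 : ContinuousAt (fun t : ℂ => lam (x + t • a)) 0 := by
        have h2 : ContinuousAt (fun t : ℂ => x + t • a) 0 := ((hcurve x).continuous).continuousAt
        have h3 : ContinuousAt lam (x + (0:ℂ) • a) := by
          rw [show x + (0:ℂ) • a = x by simp]; exact (hd x hx).continuousAt
        exact ContinuousAt.comp (g := lam) (f := fun t : ℂ => x + t • a) (x := (0:ℂ)) h3 h2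
      exact h1.sub continuousAt_id
    have hφ0 : (fun t : ℂ => lam (x + t • a) - t) 0 = lam x := by simp
    have hball : ∀ᶠ t in 𝓝 (0:ℂ), lam (x + t • a) - t ∈ Metric.ball (lam x) ρ := by
      have h4 : Filter.Tendsto (fun t : ℂ => lam (x + t • a) - t) (𝓝 0) (𝓝 (lam x)) := by
        simpa using hcont.tendsto
      exact h4 (Metric.ball_mem_nhds _ hρpos)
    have hmemU : ∀ᶠ t in 𝓝 (0:ℂ), x + t • a ∈ U := by
      have h2 : ContinuousAt (fun t : ℂ => x + t • a) 0 := ((hcurve x).continuous).continuousAt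
      apply h2.eventually_mem
      rw [show x + (0:ℂ) • a = x by simp]
      exact hU.mem_nhds hx
    filter_upwards [hball, hmemU] with t hb hu
    have hrt : (lam (x + t • a) - t) ∈ {z | (linePoly f x (-a)).IsRoot z} := by
      simp only [Set.mem_setOf_eq, Polynomial.IsRoot, hQeval]
      have harg : x - (lam (x + t • a) - t) • a = x + t • a - lam (x + t • a) • a := by
        funext i
        simp only [Pi.sub_apply, Pi.add_apply, Pi.smul_apply, smul_eq_mul]
        ring
      rw [harg]
      exact hr _ hu
    have := hρ hb
    simp only [Set.mem_compl_iff, Set.mem_diff, not_and, not_not] at this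
    have heq := this hrt
    simp only [Set.mem_singleton_iff] at heq
    linear_combination heq
  -- shift invariance of Z
  have hZshift : ∀ (x : Fin n → ℂ) (t : ℂ), ¬ Z x → ¬ Z (x + t • a) := by
    intro x t hZx hZ'
    apply hZx
    intro s
    have h6 := hZ' (s + t)
    have harg : x + t • a - (s + t) • a = x - s • a := by
      funext i
      simp only [Pi.sub_apply, Pi.add_apply, Pi.smul_apply, smul_eq_mul]
      ring
    rwa [harg] at h6
  -- choose radii
  obtain ⟨ε, hε, hballU⟩ := Metric.isOpen_iff.mp hU x₀ hx₀
  set r := ε / 2 with hrdef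
  set δ := ε / (2 * (‖a‖ + 1)) with hδdef
  have hr0 : 0 < r := by positivity
  have hδ0 : 0 < δ := by positivity
  have hmemU : ∀ x ∈ Metric.ball x₀ r, ∀ t : ℂ, ‖t‖ < δ → x + t • a ∈ U := by
    intro x hxr t ht
    apply hballU
    have hxr' : ‖x - x₀‖ < r := by
      simpa [Metric.mem_ball, dist_eq_norm] using hxr
    have hta : ‖t • a‖ ≤ δ * (‖a‖ + 1) := by
      rw [norm_smul]
      nlinarith [norm_nonneg t, norm_nonneg a, ht, hδ0.le]
    have hδε : δ * (‖a‖ + 1) = ε / 2 := by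
      rw [hδdef]
      field_simp
    simp only [Metric.mem_ball, dist_eq_norm]
    have hrw : x + t • a - x₀ = x - x₀ + t • a := by abel
    rw [hrw]
    calc ‖x - x₀ + t • a‖ ≤ ‖x - x₀‖ + ‖t • a‖ := norm_add_le _ _
      _ < r + δ * (‖a‖ + 1) := by linarith
      _ = ε := by rw [hδε, hrdef]; ring
  -- claim A: along lines through non-degenerate points, lam is affine
  have claimA : ∀ x ∈ Metric.ball x₀ r, ¬ Z x → ∀ t : ℂ, ‖t‖ < δ →
      lam (x + t • a) = lam x + t := by
    intro x hxr hZx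
    have hxU : x ∈ U := hballU (Metric.ball_subset_ball (by linarith) hxr)
    set g : ℂ → ℂ := fun t => lam (x + t • a) - (lam x + t) with hgdef
    have hgd : DifferentiableOn ℂ g (Metric.ball 0 δ) := by
      intro t ht
      apply DifferentiableAt.differentiableWithinAt
      have ht' : ‖t‖ < δ := by simpa [Metric.mem_ball, dist_eq_norm] using ht
      have hin : x + t • a ∈ U := hmemU x hxr t ht'
      have h1 : DifferentiableAt ℂ (fun t : ℂ => lam (x + t • a)) t := by
        have houter : DifferentiableAt ℂ lam (x + t • a) := hd _ hin
        exact DifferentiableAt.comp (g := lam) (f := fun t : ℂ => x + t • a) t houter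
          ((hcurve x) t)
      exact h1.sub ((differentiableAt_const _).add differentiableAt_id)
    have hana : AnalyticOnNhd ℂ g (Metric.ball 0 δ) := hgd.analyticOnNhd Metric.isOpen_ball
    have hev : g =ᶠ[𝓝 (0:ℂ)] 0 := by
      filter_upwards [claim_local x hxU hZx] with t ht
      simp only [hgdef, ht, Pi.zero_apply]
      ring
    have heq : Set.EqOn g 0 (Metric.ball 0 δ) :=
      hana.eqOn_zero_of_preconnected_of_eventuallyEq_zero
        (convex_ball (0:ℂ) δ).isPreconnected (Metric.mem_ball_self hδ0) hev
    intro t ht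
    have h7 := heq (show t ∈ Metric.ball (0:ℂ) δ by
      simpa [Metric.mem_ball, dist_eq_norm] using ht)
    have h8 : lam (x + t • a) - (lam x + t) = 0 := h7
    linear_combination h8
  -- density of non-degenerate points
  set W : Set (Fin n → ℂ) := {x | x ∈ Metric.ball x₀ r ∧ ¬ Z x} with hWdef
  have hclos : x₀ ∈ closure W := by
    rw [_root_.mem_closure_iff]
    intro O hO hxO
    obtain ⟨ε', hε', hO'⟩ := Metric.isOpen_iff.mp hO x₀ hxO
    by_contra hempty
    rw [Set.not_nonempty_iff_eq_empty] at hempty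
    have hzero : ∀ x ∈ Metric.ball x₀ (min ε' r), MvPolynomial.eval x f = 0 := by
      intro x hx
      have hx1 : x ∈ Metric.ball x₀ ε' :=
        Metric.ball_subset_ball (min_le_left _ _) hx
      have hx2 : x ∈ Metric.ball x₀ r :=
        Metric.ball_subset_ball (min_le_right _ _) hx
      have hxZ : Z x := by
        by_contra hnZ
        have hmem : x ∈ O ∩ W := ⟨hO' hx1, hx2, hnZ⟩
        rw [hempty] at hmem
        exact hmem
      have h9 := hxZ 0
      simpa using h9
    exact hf (mv_zero_of_ball (lt_min hε' hr0) hzero)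
  -- claim B: the affine identity holds at x₀ itself
  have claimB : ∀ t : ℂ, ‖t‖ < δ → lam (x₀ + t • a) = lam x₀ + t := by
    intro t ht
    set h : (Fin n → ℂ) → ℂ := fun x => lam (x + t • a) - (lam x + t) with hhdef
    have hcontB : ContinuousAt h x₀ := by
      have h1 : ContinuousAt (fun x : Fin n → ℂ => x + t • a) x₀ :=
        (continuous_id.add continuous_const).continuousAt
      have h2 : ContinuousAt lam (x₀ + t • a) :=
        (hd _ (hmemU x₀ (Metric.mem_ball_self hr0) t ht)).continuousAt
      exact (ContinuousAt.comp (g := lam) (f := fun x : Fin n → ℂ => x + t • a) h2 h1).sub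
        (((hd _ hx₀).continuousAt).add continuousAt_const)
    haveI hne : (𝓝[W] x₀).NeBot := mem_closure_iff_nhdsWithin_neBot.mp hclos
    have hT1 : Filter.Tendsto h (𝓝[W] x₀) (𝓝 (h x₀)) :=
      hcontB.continuousWithinAt.tendsto
    have hT2 : Filter.Tendsto h (𝓝[W] x₀) (𝓝 0) := by
      apply Filter.Tendsto.congr' _ tendsto_const_nhds
      filter_upwards [eventually_mem_nhdsWithin] with x hx
      have := claimA x hx.1 hx.2 t ht
      simp only [hhdef]
      linear_combination -this
    have h10 : h x₀ = 0 := tendsto_nhds_unique hT1 hT2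
    have h11 : lam (x₀ + t • a) - (lam x₀ + t) = 0 := h10
    linear_combination h11
  -- final derivative computation
  have h1 : HasDerivAt (fun t : ℂ => lam (x₀ + t • a)) ((fderiv ℂ lam x₀) a) 0 := by
    have hinner : HasDerivAt (fun t : ℂ => x₀ + t • a) a 0 := by
      simpa using ((hasDerivAt_id (0:ℂ)).smul_const a).const_add x₀
    have houter : HasFDerivAt lam (fderiv ℂ lam x₀) (x₀ + (0:ℂ) • a) := by
      rw [show x₀ + (0:ℂ) • a = x₀ by simp]
      exact (hd _ hx₀).hasFDerivAt
    exact houter.comp_hasDerivAt 0 hinner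
  have h2 : HasDerivAt (fun t : ℂ => lam (x₀ + t • a)) 1 0 := by
    have hlin : HasDerivAt (fun t : ℂ => lam x₀ + t) 1 0 :=
      (hasDerivAt_id (0:ℂ)).const_add (lam x₀)
    apply hlin.congr_of_eventuallyEq
    filter_upwards [Metric.ball_mem_nhds (0:ℂ) hδ0] with t ht
    exact claimB t (by simpa [Metric.mem_ball, dist_eq_norm] using ht)
  exact h1.unique h2


/-- Proposition 8.2: if the differentials of two eigenvalues (roots of shifted
homogeneous polynomials) are linearly dependent at a point, then they coincide. -/
theorem stmt_2 (n : ℕ) (hn : 1 ≤ n) (a : Fin n → ℂ)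
    (f₁ f₂ : MvPolynomial (Fin n) ℂ) (hf₁ : f₁ ≠ 0) (hf₂ : f₂ ≠ 0)
    (d₁ d₂ : ℕ) (hh₁ : f₁.IsHomogeneous d₁) (hh₂ : f₂.IsHomogeneous d₂)
    (U : Set (Fin n → ℂ)) (hU : IsOpen U)
    (lam₁ lam₂ : (Fin n → ℂ) → ℂ)
    (hd₁ : ∀ x ∈ U, DifferentiableAt ℂ lam₁ x)
    (hd₂ : ∀ x ∈ U, DifferentiableAt ℂ lam₂ x)
    (hr₁ : ∀ x ∈ U, MvPolynomial.eval (x - lam₁ x • a) f₁ = 0)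
    (hr₂ : ∀ x ∈ U, MvPolynomial.eval (x - lam₂ x • a) f₂ = 0)
    (x₀ : Fin n → ℂ) (hx₀ : x₀ ∈ U)
    (c : ℂ) (hc : fderiv ℂ lam₂ x₀ = c • fderiv ℂ lam₁ x₀) :
    fderiv ℂ lam₂ x₀ = fderiv ℂ lam₁ x₀ := by
  have e₁ := deriv_eq_one a hf₁ hU hd₁ hr₁ hx₀
  have e₂ := deriv_eq_one a hf₂ hU hd₂ hr₂ hx₀
  have hca : (fderiv ℂ lam₂ x₀) a = c * ((fderiv ℂ lam₁ x₀) a) := by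
    rw [hc]; rfl
  rw [e₁, e₂] at hca
  rw [mul_one] at hca
  rw [hc, ← hca, one_smul]
end

section
/- Let n ≥ 1, let f be a nonzero homogeneous polynomial in n complex variables, let U ⊆ ℂⁿ × ℂⁿ be open, and let λ : U → ℂ be ℂ-differentiable with f(x − λ(x,a)·a) = 0 for all (x,a) ∈ U. Then for every (x,a) ∈ U with Df(x − λ(x,a)·a) ≠ 0, the derivative of λ at (x,a) evaluated on the direction (0, a) equals −λ(x,a), i.e. Dλ(x,a)(0, a) = −λ(x,a). (The identity ⟨d_a λ, a⟩ = −λ, Eq. (55) in the second proof of Proposition 8.4 of the paper.) -/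
/-- Eq. (55) in the second proof of Proposition 8.4: `⟨d_a λ, a⟩ = −λ` for a
differentiable root `λ(x,a)` of `f(x − λ(x,a)a) = 0`, at points where `Df ≠ 0`. -/
theorem stmt_3 (n : ℕ) (hn : 1 ≤ n)
    (f : MvPolynomial (Fin n) ℂ) (hf : f ≠ 0) (d : ℕ) (hh : f.IsHomogeneous d)
    (U : Set ((Fin n → ℂ) × (Fin n → ℂ))) (hU : IsOpen U)
    (lam : (Fin n → ℂ) × (Fin n → ℂ) → ℂ)
    (hdiff : ∀ p ∈ U, DifferentiableAt ℂ lam p)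
    (hroot : ∀ p ∈ U, MvPolynomial.eval (p.1 - lam p • p.2) f = 0) :
    ∀ p ∈ U,
      fderiv ℂ (fun y => MvPolynomial.eval y f) (p.1 - lam p • p.2) ≠ 0 →
      fderiv ℂ lam p ((0 : Fin n → ℂ), p.2) = -lam p := by
  intro p hp hL
  set x := p.1
  set a := p.2
  set lam' := fderiv ℂ lam p with hlam'
  set y := x - lam p • a with hy
  set L := fderiv ℂ (fun y => MvPolynomial.eval y f) y with hLdef
  -- F is differentiable
  have hFan : ∀ z : Fin n → ℂ, AnalyticAt ℂ (fun y => MvPolynomial.eval y f) z := fun z =>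
    (AnalyticOnNhd.eval_mvPolynomial (𝕜 := ℂ) f) z trivial
  have hF : HasFDerivAt (fun y => MvPolynomial.eval y f) L y :=
    ((hFan y).differentiableAt).hasFDerivAt
  have hlamd : DifferentiableAt ℂ lam p := hdiff p hp
  -- derivative of φ q = q.1 - lam q • q.2
  have hφ : HasFDerivAt (fun q : (Fin n → ℂ) × (Fin n → ℂ) => q.1 - lam q • q.2)
      ((ContinuousLinearMap.fst ℂ (Fin n → ℂ) (Fin n → ℂ)) -
        (lam p • (ContinuousLinearMap.snd ℂ (Fin n → ℂ) (Fin n → ℂ)) + lam'.smulRight a)) p := by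
    exact (hasFDerivAt_fst).sub ((hlamd.hasFDerivAt).smul (hasFDerivAt_snd))
  have hcomp : HasFDerivAt (fun q : (Fin n → ℂ) × (Fin n → ℂ) =>
      MvPolynomial.eval (q.1 - lam q • q.2) f)
      (L.comp ((ContinuousLinearMap.fst ℂ (Fin n → ℂ) (Fin n → ℂ)) -
        (lam p • (ContinuousLinearMap.snd ℂ (Fin n → ℂ) (Fin n → ℂ)) + lam'.smulRight a))) p :=
    by have h := hF.comp p hφ; exact h
  -- the composed function is constantly 0 near p
  have hzero : HasFDerivAt (fun q : (Fin n → ℂ) × (Fin n → ℂ) =>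
      MvPolynomial.eval (q.1 - lam q • q.2) f) (0 : _ →L[ℂ] ℂ) p := by
    apply hasFDerivAt_const (0 : ℂ) p |>.congr_of_eventuallyEq
    filter_upwards [hU.mem_nhds hp] with q hq
    exact hroot q hq
  have hDeq := hcomp.unique hzero
  have key : ∀ v : (Fin n → ℂ) × (Fin n → ℂ),
      L v.1 - (lam p * L v.2 + lam' v * L a) = 0 := by
    intro v
    have := congrFun (congrArg (fun T : _ →L[ℂ] ℂ => (T : _ → ℂ)) hDeq) v
    simpa [ContinuousLinearMap.comp_apply, ContinuousLinearMap.sub_apply,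
      ContinuousLinearMap.add_apply, ContinuousLinearMap.smul_apply,
      ContinuousLinearMap.smulRight_apply, map_sub, map_add, map_smul,
      smul_eq_mul] using this
  have hLa : L a ≠ 0 := by
    intro h0
    apply hL
    ext w
    have := key (w, 0)
    simp [h0] at this
    simpa [hLdef] using this
  have h2 := key (0, a)
  simp at h2
  have : (lam p + lam' (0, a)) * L a = 0 := by linear_combination -h2
  rcases mul_eq_zero.mp this with h | h
  · exact (by linear_combination h : lam' ((0 : Fin n → ℂ), a) = -lam p)
  · exact absurd h hLa
end

section
/- Let 𝔤 be a finite-dimensional complex Lie algebra, let f : 𝔤* → ℂ be ℂ-differentiable and a semi-invariant with weight χ ∈ 𝔤*, meaning that for all y ∈ 𝔤* and all u ∈ 𝔤 one has y(⁅u, ∇f(y)⁆) = χ(u) · f(y). Let a ∈ 𝔤*, let U ⊆ 𝔤* be open and let λ : U → ℂ be ℂ-differentiable with f(x − λ(x)·a) = 0 for all x ∈ U. Then for every x ∈ U at which ∇f(x − λ(x)·a) ≠ 0 and for every η ∈ 𝔤: (x − λ(x)·a)(⁅∇λ(x), η⁆) = 0; equivalently x(⁅∇λ(x), η⁆) = λ(x)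 · a(⁅∇λ(x), η⁆). (Lemma 8.11 of the paper: {λ, g}_x = λ·{λ, g}_a for roots of shifted semi-invariants, at points where df(x − λa) ≠ 0.) -/
/-- Lemma 8.11: let `𝔤` be a finite-dimensional complex Lie algebra, modeled in
coordinates as `ℂⁿ = Fin n → ℂ` with a bilinear bracket `br` satisfying the Lie
algebra axioms; its dual `𝔤*` is identified with `Fin n → ℂ` via the standard
pairing `⟨x, u⟩ = ∑ i, x i * u i`, and gradients `∇F(y) ∈ 𝔤` are specified by the
defining property `DF(y)(ξ) = ∑ i, ξ i * ∇F(y) i` (the canonical identification of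
`𝔤` with its double dual).  If `f` is a differentiable semi-invariant with weight
`χ ∈ 𝔤*`, i.e. `y(⁅u, ∇f(y)⁆) = χ(u)·f(y)` for all `y ∈ 𝔤*`, `u ∈ 𝔤`, and `λ` is a
differentiable root of `f(x − λ(x)·a) = 0` on an open set `U`, then at every
`x ∈ U` with `∇f(x − λ(x)a) ≠ 0` and for every `η ∈ 𝔤`:
`(x − λ(x)a)(⁅∇λ(x), η⁆) = 0`, equivalently
`x(⁅∇λ(x), η⁆) = λ(x)·a(⁅∇λ(x), η⁆)`. -/
theorem stmt_5 (n : ℕ)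
    (br : (Fin n → ℂ) →ₗ[ℂ] (Fin n → ℂ) →ₗ[ℂ] (Fin n → ℂ))
    (halt : ∀ u, br u u = 0)
    (hjac : ∀ u v w, br u (br v w) + br v (br w u) + br w (br u v) = 0)
    (f : (Fin n → ℂ) → ℂ) (gradf : (Fin n → ℂ) → (Fin n → ℂ))
    (hf : Differentiable ℂ f)
    (hgradf : ∀ y ξ : Fin n → ℂ, fderiv ℂ f y ξ = ∑ i, ξ i * gradf y i)
    (χ : Fin n → ℂ)
    (hsemi : ∀ y u : Fin n → ℂ,
      (∑ i, y i * br u (gradf y) i) = (∑ i, χ i * u i) * f y)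
    (a : Fin n → ℂ) (U : Set (Fin n → ℂ)) (hU : IsOpen U)
    (lam : (Fin n → ℂ) → ℂ) (gradlam : (Fin n → ℂ) → (Fin n → ℂ))
    (hlam : ∀ x ∈ U, DifferentiableAt ℂ lam x)
    (hgradlam : ∀ x ∈ U, ∀ ξ : Fin n → ℂ,
      fderiv ℂ lam x ξ = ∑ i, ξ i * gradlam x i)
    (hroot : ∀ x ∈ U, f (x - lam x • a) = 0) :
    ∀ x ∈ U, gradf (x - lam x • a) ≠ 0 →
      ∀ η : Fin n → ℂ,
        (∑ i, (x - lam x • a) i * br (gradlam x) η i) = 0 ∧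
        (∑ i, x i * br (gradlam x) η i) =
          lam x * ∑ i, a i * br (gradlam x) η i := by
  intro x hx hne η
  set y := x - lam x • a with hy
  set c := ∑ i, a i * gradf y i with hc
  have hlx := hlam x hx
  -- antisymmetry of bracket
  have hanti : ∀ u v : Fin n → ℂ, br u v = - br v u := by
    intro u v
    have h := halt (u + v)
    simp only [map_add, LinearMap.add_apply, halt, zero_add, add_zero] at h
    linear_combination h
  -- differentiability of the shift map
  have hφd : DifferentiableAt ℂ (fun z => z - lam z • a) x :=
    differentiableAt_fun_id.sub (hlx.smul_const a)
  have hfy : f y = 0 := by rw [hy]; exact hroot x hx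
  -- chain rule: fderiv f y ξ = (fderiv lam x ξ) * c
  have hkey : ∀ ξ, fderiv ℂ f y ξ = fderiv ℂ lam x ξ * c := by
    have hg0 : (fun z => f (z - lam z • a)) =ᶠ[nhds x] fun _ => (0:ℂ) :=
      Filter.eventuallyEq_of_mem (hU.mem_nhds hx) hroot
    have hD : fderiv ℂ (fun z => f (z - lam z • a)) x = 0 := by
      rw [hg0.fderiv_eq]; exact fderiv_const_apply 0
    have hcomp : fderiv ℂ (fun z => f (z - lam z • a)) x
        = (fderiv ℂ f y).comp (fderiv ℂ (fun z => z - lam z • a) x) := by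
      rw [hy]
      exact fderiv_comp x (hf _) hφd
    intro ξ
    have hφξ : fderiv ℂ (fun z => z - lam z • a) x ξ = ξ - fderiv ℂ lam x ξ • a := by
      rw [fderiv_fun_sub differentiableAt_fun_id (hlx.smul_const a), fderiv_smul_const hlx]
      simp
    have h0 : fderiv ℂ f y (ξ - fderiv ℂ lam x ξ • a) = 0 := by
      have := congrArg (fun L => L ξ) (hcomp.symm.trans hD)
      simpa [ContinuousLinearMap.comp_apply, hφξ] using this
    rw [map_sub, map_smul, sub_eq_zero] at h0
    rw [h0, hgradf y a, smul_eq_mul, hc]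
  -- gradf y = c • gradlam x
  have hgrad : ∀ j, gradf y j = c * gradlam x j := by
    intro j
    have h3 := hkey (Pi.single j 1)
    rw [hgradf y (Pi.single j 1), hgradlam x hx (Pi.single j 1)] at h3
    simp only [Pi.single_apply, ite_mul, one_mul, zero_mul,
      Finset.sum_ite_eq', Finset.mem_univ, if_true] at h3
    rw [h3]; ring
  have hc0 : c ≠ 0 := by
    intro h
    apply hne
    funext j
    simp [hgrad j, h]
  -- semi-invariance gives the key vanishing
  have h2 := hsemi y η
  rw [hfy, mul_zero] at h2
  have hA : ∑ i, y i * br (gradf y) η i = 0 := by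
    calc ∑ i, y i * br (gradf y) η i
        = ∑ i, -(y i * br η (gradf y) i) := by
          refine Finset.sum_congr rfl fun i _ => ?_
          rw [hanti (gradf y) η]; simp
      _ = 0 := by rw [Finset.sum_neg_distrib, h2, neg_zero]
  have hB : ∑ i, y i * br (gradf y) η i = c * ∑ i, y i * br (gradlam x) η i := by
    rw [Finset.mul_sum]
    refine Finset.sum_congr rfl fun i _ => ?_
    have : gradf y = c • gradlam x := funext fun j => by
      rw [hgrad j]; simp
    rw [this, map_smul]
    simp [mul_comm, mul_assoc, mul_left_comm]
  have hS : ∑ i, y i * br (gradlam x) η i = 0 := by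
    rcases mul_eq_zero.mp (hB ▸ hA) with h | h
    · exact absurd h hc0
    · exact h
  refine ⟨hS, ?_⟩
  have hexp : ∑ i, y i * br (gradlam x) η i
      = (∑ i, x i * br (gradlam x) η i) - lam x * ∑ i, a i * br (gradlam x) η i := by
    rw [Finset.mul_sum, ← Finset.sum_sub_distrib]
    refine Finset.sum_congr rfl fun i _ => ?_
    rw [hy]
    simp [sub_mul, mul_assoc]
  rw [hexp] at hS
  linear_combination hS
end

section
/- Let x, a : Fin 3 → ℂ be linearly independent over ℂ. Then there exist vectors w₁, u, v : Fin 3 → ℂ such that: (i) for every λ ∈ ℂ, Σᵢ (x(i) + λ·a(i))·w₁(i) = 0 and Σᵢ (x(i) + λ·a(i))·(u(i) + λ·v(i)) = 0; (ii) v ≠ 0; and (iii) w₁ and u are linearly independent. (Proposition 8.15 of the paper: for a generic pair (x,a) ∈ ℂ³ × ℂ³, the equation (x + λa)·w(λ) = 0 has polynomial solutions w₁(λ) of degree 0 and w₂(λ) = u + λ·v of degree 1 whose initial vectors w₁(0), w₂(0) are linearly independent.) -/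
open Matrix

/-- Proposition 8.15: for linearly independent `x, a ∈ ℂ³`, the equation
`(x + λa)·w(λ) = 0` has polynomial solutions `w₁(λ) = w₁` of degree 0 and
`w₂(λ) = u + λv` of degree 1 whose initial vectors `w₁` and `u` are linearly
independent. -/
theorem stmt_7 (x a : Fin 3 → ℂ) (h : LinearIndependent ℂ ![x, a]) :
    ∃ w₁ u v : Fin 3 → ℂ,
      (∀ lam : ℂ,
        (∑ i, (x i + lam * a i) * w₁ i) = 0 ∧
        (∑ i, (x i + lam * a i) * (u i + lam * v i)) = 0) ∧
      v ≠ 0 ∧ LinearIndependent ℂ ![w₁, u] := by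
  have hc : crossProduct x a ≠ 0 := crossProduct_ne_zero_iff_linearIndependent.2 h
  obtain ⟨j, hj⟩ : ∃ j, (crossProduct x a) j ≠ 0 := by
    by_contra hne
    push_neg at hne
    exact hc (funext hne)
  set e : Fin 3 → ℂ := Pi.single j 1 with he
  set c : Fin 3 → ℂ := crossProduct x a with hcdef
  set u : Fin 3 → ℂ := crossProduct e x with hu
  set v : Fin 3 → ℂ := crossProduct e a with hv
  -- key dot product computations
  have hxc : ∑ i, x i * c i = 0 := by
    fin_cases j <;> simp [hcdef, cross_apply, Fin.sum_univ_three] <;> ring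
  have hac : ∑ i, a i * c i = 0 := by
    fin_cases j <;> simp [hcdef, cross_apply, Fin.sum_univ_three] <;> ring
  have hxu : ∑ i, x i * u i = 0 := by
    fin_cases j <;>
      simp [hu, he, hcdef, cross_apply, Fin.sum_univ_three, Pi.single] <;> ring
  have hav : ∑ i, a i * v i = 0 := by
    fin_cases j <;>
      simp [hv, he, hcdef, cross_apply, Fin.sum_univ_three, Pi.single] <;> ring
  have hau : ∑ i, a i * u i = c j := by
    fin_cases j <;>
      simp [hu, he, hcdef, cross_apply, Fin.sum_univ_three, Pi.single] <;> ring
  have hxv : ∑ i, x i * v i = -(c j) := by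
    fin_cases j <;>
      simp [hv, he, hcdef, cross_apply, Fin.sum_univ_three, Pi.single] <;> ring
  refine ⟨c, u, v, fun lam => ⟨?_, ?_⟩, ?_, ?_⟩
  · have : ∑ i, (x i + lam * a i) * c i
        = (∑ i, x i * c i) + lam * ∑ i, a i * c i := by
      rw [Finset.mul_sum, ← Finset.sum_add_distrib]
      congr 1; ext i; ring
    rw [this, hxc, hac]; ring
  · have : ∑ i, (x i + lam * a i) * (u i + lam * v i)
        = (∑ i, x i * u i) + lam * ((∑ i, x i * v i) + ∑ i, a i * u i)
          + lam ^ 2 * ∑ i, a i * v i := by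
      simp only [Finset.mul_sum, ← Finset.sum_add_distrib]
      congr 1; ext i; ring
    rw [this, hxu, hxv, hau, hav]; ring
  · intro hv0
    apply hj
    rw [hv0] at hxv
    simpa using hxv.symm
  · rw [LinearIndependent.pair_iff]
    intro s t hst
    have hdot : ∑ i, a i * (s * c i + t * u i) = 0 := by
      rw [show (0 : Fin 3 → ℂ) = fun _ => 0 from rfl] at hst
      have := congrFun hst
      simp only [Pi.add_apply, Pi.smul_apply, smul_eq_mul] at this
      simp [this]
    have hexp : ∑ i, a i * (s * c i + t * u i)
        = s * (∑ i, a i * c i) + t * ∑ i, a i * u i := by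
      rw [Finset.mul_sum, Finset.mul_sum, ← Finset.sum_add_distrib]
      congr 1; ext i; ring
    rw [hexp, hac, hau] at hdot
    have ht : t = 0 := by
      have hdot' : t * c j = 0 := by simpa using hdot
      rcases mul_eq_zero.mp hdot' with h' | h'
      · exact h'
      · exact absurd h' hj
    subst ht
    refine ⟨?_, rfl⟩
    by_contra hs
    apply hc
    funext i
    have := congrFun hst i
    simp only [Pi.add_apply, Pi.smul_apply, smul_eq_mul, zero_mul, add_zero] at this
    have : s * c i = 0 := by simpa using this
    rcases mul_eq_zero.mp this with h' | h'
    · exact absurd h' hs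
    · simpa [hcdef] using h'
end

section
/- Let n ≥ 2 and let a, b : Fin n → ℂ. Assume b(0) ≠ 0 and a(1)·b(0) ≠ a(0)·b(1). Then the lower-triangular Toeplitz matrix T(b) is invertible and the matrix T(b)⁻¹ * T(a) is similar to the single n × n Jordan block J(a(0)/b(0), n). (Proposition 4.3 of the paper: the Jordan canonical form of P_B⁻¹P_A for two lower-triangular Toeplitz matrices with b₁ ≠ 0 and a₂b₁ ≠ a₁b₂ consists of one Jordan n × n block with eigenvalue a₁/b₁.) -/
/-- The `n × n` lower-triangular Toeplitz matrix with entries `T(a)(i,j) = a(i−j)` for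
`j ≤ i` and `0` for `j > i`. -/
def toep (n : ℕ) (a : Fin n → ℂ) : Matrix (Fin n) (Fin n) ℂ :=
  fun i j =>
    if (j : ℕ) ≤ (i : ℕ) then
      a ⟨(i : ℕ) - (j : ℕ), Nat.lt_of_le_of_lt (Nat.sub_le _ _) i.isLt⟩
    else 0

/-- The `k × k` Jordan block with eigenvalue `μ`. -/
def jordanBlock (μ : ℂ) (k : ℕ) : Matrix (Fin k) (Fin k) ℂ :=
  fun i j => if i = j then μ else if (i : ℕ) + 1 = (j : ℕ) then 1 else 0

namespace Stmt8

noncomputable def toepN (n : ℕ) (f : ℕ → ℂ) : Matrix (Fin n) (Fin n) ℂ :=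
  fun i j => if (j : ℕ) ≤ (i : ℕ) then f ((i : ℕ) - (j : ℕ)) else 0

noncomputable def conv (f g : ℕ → ℂ) (d : ℕ) : ℂ :=
  ∑ m ∈ Finset.range (d + 1), f (d - m) * g m

noncomputable def cfun (A B : ℕ → ℂ) : ℕ → ℂ
  | k => (A k - ∑ m : Fin k, B (k - (m : ℕ)) * cfun A B (m : ℕ)) / B 0
termination_by k => k
decreasing_by exact m.isLt

lemma cfun_def (A B : ℕ → ℂ) (k : ℕ) :
    cfun A B k = (A k - ∑ m ∈ Finset.range k, B (k - m) * cfun A B m) / B 0 := by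
  rw [cfun, Fin.sum_univ_eq_sum_range (fun m => B (k - m) * cfun A B m)]

lemma conv_cfun (A B : ℕ → ℂ) (hB : B 0 ≠ 0) (d : ℕ) : conv B (cfun A B) d = A d := by
  have hc : cfun A B d * B 0 = A d - ∑ m ∈ Finset.range d, B (d - m) * cfun A B m := by
    rw [cfun_def, div_mul_cancel₀ _ hB]
  rw [conv, Finset.sum_range_succ, Nat.sub_self]
  linear_combination hc

lemma toepN_mul (n : ℕ) (f g : ℕ → ℂ) :
    toepN n f * toepN n g = toepN n (conv f g) := by
  funext i j
  rw [Matrix.mul_apply]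
  simp only [toepN]
  by_cases hij : (j : ℕ) ≤ (i : ℕ)
  · rw [if_pos hij]
    have h1 : ∀ k : Fin n,
        (if (k : ℕ) ≤ (i : ℕ) then f ((i : ℕ) - k) else 0) *
          (if (j : ℕ) ≤ (k : ℕ) then g ((k : ℕ) - j) else 0) =
        if (k : ℕ) ∈ Finset.Icc (j : ℕ) (i : ℕ) then f ((i : ℕ) - k) * g ((k : ℕ) - j) else 0 := by
      intro k
      simp only [Finset.mem_Icc]
      by_cases h1 : (k : ℕ) ≤ (i : ℕ) <;> by_cases h2 : (j : ℕ) ≤ (k : ℕ) <;> simp [h1, h2]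
    rw [Finset.sum_congr rfl fun k _ => h1 k]
    rw [Fin.sum_univ_eq_sum_range
      (fun k => if k ∈ Finset.Icc (j:ℕ) (i:ℕ) then f ((i:ℕ) - k) * g (k - (j:ℕ)) else 0)]
    rw [← Finset.sum_filter]
    have hfil : (Finset.range n).filter (fun k => k ∈ Finset.Icc (j:ℕ) (i:ℕ)) =
        Finset.Icc (j:ℕ) (i:ℕ) := by
      ext k
      simp only [Finset.mem_filter, Finset.mem_range, Finset.mem_Icc]
      have := i.isLt
      omega
    rw [hfil, ← Finset.Ico_add_one_right_eq_Icc, Finset.sum_Ico_eq_sum_range, conv]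
    have hlen : (i : ℕ) + 1 - (j : ℕ) = (i : ℕ) - (j : ℕ) + 1 := by omega
    rw [hlen]
    refine Finset.sum_congr rfl fun m hm => ?_
    congr 1
    · congr 1; omega
    · congr 1; omega
  · rw [if_neg hij]
    refine Finset.sum_eq_zero fun k _ => ?_
    by_cases hk : (k : ℕ) ≤ (i : ℕ)
    · simp only [if_neg (show ¬(j:ℕ) ≤ (k:ℕ) by omega), mul_zero]
    · simp only [if_neg hk, zero_mul]

section Kpow

variable {n : ℕ} {g : ℕ → ℂ}

lemma toepN_apply_zero (hg : g 0 = 0) (i j : Fin n) (h : (i : ℕ) ≤ (j : ℕ)) :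
    toepN n g i j = 0 := by
  simp only [toepN]
  split_ifs with h'
  · have : (i : ℕ) - (j : ℕ) = 0 := by omega
    rw [this, hg]
  · rfl

lemma Kpow_eq_zero (hg : g 0 = 0) (m : ℕ) (i j : Fin n) (h : (i : ℕ) < (j : ℕ) + m) :
    (toepN n g ^ m) i j = 0 := by
  induction m generalizing i j with
  | zero =>
    rw [pow_zero]
    exact Matrix.one_apply_ne (by intro he; rw [he] at h; omega)
  | succ m ih =>
    rw [pow_succ, Matrix.mul_apply]
    refine Finset.sum_eq_zero fun k _ => ?_
    by_cases hk : (i : ℕ) < (k : ℕ) + m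
    · rw [ih i k hk, zero_mul]
    · rw [toepN_apply_zero hg k j (by omega), mul_zero]

lemma Kpow_diag (hg : g 0 = 0) (m : ℕ) (i j : Fin n) (h : (i : ℕ) = (j : ℕ) + m) :
    (toepN n g ^ m) i j = g 1 ^ m := by
  induction m generalizing i j with
  | zero =>
    have hij : i = j := Fin.ext (by omega)
    rw [pow_zero, pow_zero, hij, Matrix.one_apply_eq]
  | succ m ih =>
    have hjn : (j : ℕ) + 1 < n := by have := i.isLt; omega
    set k0 : Fin n := ⟨(j : ℕ) + 1, hjn⟩ with hk0
    rw [pow_succ, Matrix.mul_apply]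
    rw [Finset.sum_eq_single k0]
    · have h1 : ((toepN n g ^ m) i k0 : ℂ) = g 1 ^ m := ih i k0 (by simp [hk0]; omega)
      have h2 : toepN n g k0 j = g 1 := by
        simp only [toepN, hk0]
        rw [if_pos (by simp)]
        norm_num
      rw [h1, h2, pow_succ]
    · intro k _ hk
      by_cases hki : (i : ℕ) < (k : ℕ) + m
      · rw [Kpow_eq_zero hg m i k hki, zero_mul]
      · have hkj : (k : ℕ) ≤ (j : ℕ) := by
          have : (k : ℕ) ≠ (j : ℕ) + 1 := fun he => hk (Fin.ext (by simp [hk0, he]))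
          omega
        rw [toepN_apply_zero hg k j hkj, mul_zero]
    · intro hmem; exact absurd (Finset.mem_univ k0) hmem

end Kpow

end Stmt8

open Stmt8 in
/-- Proposition 4.3: for lower-triangular Toeplitz matrices `T(a)`, `T(b)` with
`b₀ ≠ 0` and `a₁b₀ ≠ a₀b₁`, the matrix `T(b)⁻¹ T(a)` is similar to a single
`n × n` Jordan block with eigenvalue `a₀/b₀`. -/
theorem stmt_8 (n : ℕ) (hn : 2 ≤ n) (a b : Fin n → ℂ)
    (hb0 : b ⟨0, by omega⟩ ≠ 0)
    (hab : a ⟨1, by omega⟩ * b ⟨0, by omega⟩ ≠ a ⟨0, by omega⟩ * b ⟨1, by omega⟩) :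
    IsUnit (toep n b) ∧
    ∃ S : Matrix (Fin n) (Fin n) ℂ, IsUnit S ∧
      (toep n b)⁻¹ * toep n a =
        S⁻¹ * jordanBlock (a ⟨0, by omega⟩ / b ⟨0, by omega⟩) n * S := by
  have hn0 : 0 < n := by omega
  have hn1 : 1 < n := by omega
  set A : ℕ → ℂ := fun k => if h : k < n then a ⟨k, h⟩ else 0 with hA
  set B : ℕ → ℂ := fun k => if h : k < n then b ⟨k, h⟩ else 0 with hB
  have hB0 : B 0 = b ⟨0, hn0⟩ := by simp [hB, hn0]
  have hB0' : B 0 ≠ 0 := by rw [hB0]; exact hb0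
  set C : ℕ → ℂ := cfun A B with hC
  -- identify toep with toepN
  have htoepa : toep n a = toepN n A := by
    funext i j
    simp only [toep, toepN, hA]
    split_ifs with h h2
    · rfl
    · exact absurd (Nat.lt_of_le_of_lt (Nat.sub_le _ _) i.isLt) h2
    · rfl
  have htoepb : toep n b = toepN n B := by
    funext i j
    simp only [toep, toepN, hB]
    split_ifs with h h2
    · rfl
    · exact absurd (Nat.lt_of_le_of_lt (Nat.sub_le _ _) i.isLt) h2
    · rfl
  -- invertibility of toep n b
  have hdiagb : ∀ i : Fin n, toep n b i i = b ⟨0, hn0⟩ := by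
    intro i
    simp only [toep, le_refl, if_pos, Nat.sub_self]
  have hdetb : (toep n b).det = b ⟨0, hn0⟩ ^ n := by
    rw [Matrix.det_of_lowerTriangular (toep n b)
      (fun i j hij => by
        have hij' : i < j := hij
        simp only [toep, if_neg (by omega : ¬(j : ℕ) ≤ (i : ℕ))])]
    rw [Finset.prod_congr rfl fun i _ => hdiagb i, Finset.prod_const, Finset.card_univ,
      Fintype.card_fin]
  have hUb : IsUnit (toep n b) := by
    rw [Matrix.isUnit_iff_isUnit_det, hdetb, isUnit_iff_ne_zero]
    exact pow_ne_zero _ hb0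
  have hUbdet : IsUnit (toepN n B).det := by
    rw [← htoepb, ← Matrix.isUnit_iff_isUnit_det]; exact hUb
  refine ⟨hUb, ?_⟩
  -- the quotient matrix M = toepN n C
  have hconvBC : conv B C = A := funext (conv_cfun A B hB0')
  have hconv : toepN n B * toepN n C = toepN n A := by rw [toepN_mul, hconvBC]
  have hMdef : (toep n b)⁻¹ * toep n a = toepN n C := by
    rw [htoepa, htoepb, ← hconv, ← Matrix.mul_assoc, Matrix.nonsing_inv_mul _ hUbdet,
      Matrix.one_mul]
  -- values of C
  have hC0 : C 0 = a ⟨0, hn0⟩ / b ⟨0, hn0⟩ := by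
    rw [hC, cfun_def]
    simp [hA, hB, hn0]
  have hC1 : C 1 * (b ⟨0, hn0⟩ * b ⟨0, hn0⟩) =
      a ⟨1, hn1⟩ * b ⟨0, hn0⟩ - a ⟨0, hn0⟩ * b ⟨1, hn1⟩ := by
    have h1 : C 1 = (A 1 - B 1 * C 0) / B 0 := by
      rw [hC, cfun_def]
      simp [Finset.sum_range_one, ← hC]
    have hA1 : A 1 = a ⟨1, hn1⟩ := by simp [hA, hn1]
    have hB1 : B 1 = b ⟨1, hn1⟩ := by simp [hB, hn1]
    rw [h1, hA1, hB1, hB0, hC0]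
    field_simp
  have hC1ne : C 1 ≠ 0 := by
    intro hzero
    apply hab
    have := hC1
    rw [hzero, zero_mul] at this
    linear_combination -this
  -- the nilpotent part
  set g : ℕ → ℂ := fun k => if k = 0 then 0 else C k with hg
  have hg0 : g 0 = 0 := by simp [hg]
  have hg1 : g 1 = C 1 := by simp [hg]
  set K : Matrix (Fin n) (Fin n) ℂ := toepN n g with hK
  have hMK : toepN n C = K + C 0 • (1 : Matrix (Fin n) (Fin n) ℂ) := by
    funext i j
    simp only [toepN, Matrix.add_apply, Matrix.smul_apply, Matrix.one_apply, smul_eq_mul, hK, hg]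
    by_cases hij : (j : ℕ) ≤ (i : ℕ)
    · rw [if_pos hij, if_pos hij]
      by_cases he : i = j
      · subst he
        simp
      · have hne : (i : ℕ) - (j : ℕ) ≠ 0 := by
          have : (i : ℕ) ≠ (j : ℕ) := fun hv => he (Fin.ext hv)
          omega
        rw [if_neg hne, if_neg he, mul_zero, add_zero]
    · have he : i ≠ j := fun hv => hij (by rw [hv])
      rw [if_neg hij, if_neg hij, if_neg he, mul_zero, add_zero]
  set last : Fin n := ⟨n - 1, by omega⟩ with hlast
  set S : Matrix (Fin n) (Fin n) ℂ := fun i j => (K ^ (i : ℕ)) last j with hS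
  -- invertibility of S
  have hS_unit : IsUnit S := by
    have hSrev : S.submatrix id Fin.revPerm =
        fun i j : Fin n => (K ^ (i : ℕ)) last (Fin.rev j) := by
      funext i j
      simp [hS, Matrix.submatrix_apply]
      rfl
    have hupper : ∀ i j : Fin n, j < i → (S.submatrix id Fin.revPerm) i j = 0 := by
      intro i j hij
      rw [hSrev]
      refine Kpow_eq_zero hg0 (i : ℕ) last (Fin.rev j) ?_
      have h1 : (Fin.rev j : ℕ) = n - ((j : ℕ) + 1) := rfl
      have h2 : (j : ℕ) < (i : ℕ) := hij
      have := i.isLt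
      simp only [hlast, h1]
      omega
    have hdiagS : ∀ i : Fin n, (S.submatrix id Fin.revPerm) i i = C 1 ^ (i : ℕ) := by
      intro i
      rw [hSrev, ← hg1]
      refine Kpow_diag hg0 (i : ℕ) last (Fin.rev i) ?_
      have h1 : (Fin.rev i : ℕ) = n - ((i : ℕ) + 1) := rfl
      have := i.isLt
      simp only [hlast, h1]
      omega
    have hdet' : (S.submatrix id Fin.revPerm).det = ∏ i : Fin n, C 1 ^ (i : ℕ) := by
      rw [Matrix.det_of_upperTriangular (fun i j hij => hupper i j hij)]
      exact Finset.prod_congr rfl fun i _ => hdiagS i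
    have hdet : ((Equiv.Perm.sign (Fin.revPerm : Equiv.Perm (Fin n)) : ℤ) : ℂ) * S.det = ∏ i : Fin n, C 1 ^ (i : ℕ) := by
      rw [← hdet', Matrix.det_permute']
    rw [Matrix.isUnit_iff_isUnit_det, isUnit_iff_ne_zero]
    intro h0
    rw [h0, mul_zero] at hdet
    exact (Finset.prod_ne_zero_iff.mpr fun i _ => pow_ne_zero _ hC1ne) hdet.symm
  refine ⟨S, hS_unit, ?_⟩
  have hSdet : IsUnit S.det := (Matrix.isUnit_iff_isUnit_det S).mp hS_unit
  -- the key similarity equation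
  set U : Matrix (Fin n) (Fin n) ℂ :=
    fun i j => if (i : ℕ) + 1 = (j : ℕ) then 1 else 0 with hU
  have hJ : jordanBlock (C 0) n = C 0 • (1 : Matrix (Fin n) (Fin n) ℂ) + U := by
    funext i j
    simp only [jordanBlock, Matrix.add_apply, Matrix.smul_apply, Matrix.one_apply, smul_eq_mul]
    simp only [hU]
    by_cases he : i = j
    · subst he
      rw [if_pos rfl, if_pos rfl, if_neg (by omega), mul_one, add_zero]
    · rw [if_neg he, if_neg he, mul_zero, zero_add]
  have hUS : U * S = fun i j : Fin n => (K ^ ((i : ℕ) + 1)) last j := by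
    funext i j
    rw [Matrix.mul_apply]
    by_cases h : (i : ℕ) + 1 < n
    · set i1 : Fin n := ⟨(i : ℕ) + 1, h⟩ with hi1
      have hcond : ∀ k : Fin n, (U i k) = if i1 = k then (1 : ℂ) else 0 := by
        intro k
        simp only [hU, hi1, Fin.ext_iff]
      calc ∑ k : Fin n, U i k * S k j
          = ∑ k : Fin n, if i1 = k then S k j else 0 := by
            refine Finset.sum_congr rfl fun k _ => ?_
            rw [hcond k, ite_mul, one_mul, zero_mul]
        _ = S i1 j := by
            rw [Finset.sum_ite_eq, if_pos (Finset.mem_univ i1)]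
        _ = (K ^ ((i : ℕ) + 1)) last j := rfl
    · have hzero : (K ^ ((i : ℕ) + 1)) last j = 0 := by
        refine Kpow_eq_zero hg0 _ last j ?_
        have := j.isLt
        simp only [hlast]
        omega
      rw [hzero]
      refine Finset.sum_eq_zero fun k _ => ?_
      have : (i : ℕ) + 1 ≠ (k : ℕ) := by have := k.isLt; omega
      simp only [hU, if_neg this, zero_mul]
  have hSM : S * toepN n C = jordanBlock (C 0) n * S := by
    have hL : S * toepN n C = fun i j : Fin n => (K ^ ((i : ℕ) + 1) + C 0 • K ^ (i : ℕ)) last j := by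
      funext i j
      rw [Matrix.mul_apply]
      have : ∑ k : Fin n, S i k * toepN n C k j = (K ^ (i : ℕ) * toepN n C) last j := by
        rw [Matrix.mul_apply]
      rw [this, hMK, Matrix.mul_add, Matrix.mul_smul, Matrix.mul_one, ← pow_succ]
    rw [hL, hJ, Matrix.add_mul, hUS, Matrix.smul_mul, Matrix.one_mul]
    funext i j
    simp only [Matrix.add_apply, Matrix.smul_apply, smul_eq_mul]
    show _ = C 0 * (K ^ (i : ℕ)) last j + (K ^ ((i : ℕ) + 1)) last j
    ring
  have hfinal : toepN n C = S⁻¹ * jordanBlock (C 0) n * S := by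
    have h1 : S⁻¹ * (S * toepN n C) = S⁻¹ * (jordanBlock (C 0) n * S) := by rw [hSM]
    rw [← Matrix.mul_assoc, Matrix.nonsing_inv_mul _ hSdet, Matrix.one_mul,
      ← Matrix.mul_assoc] at h1
    exact h1
  rw [hMdef, hfinal, hC0]
end

section
/- Let m ≥ 0 and λ ∈ ℂ, and let M(λ) be the (2m+1) × (2m+1) Kronecker-block matrix. Then the kernel of M(λ) is the one-dimensional subspace spanned by the vector w(λ) defined by w(λ)(inl i) = 0 for i ∈ Fin m and w(λ)(inr j) = (−λ)^{m − j} for j ∈ Fin (m+1). (Proposition 2.2(2) of the paper: for one Kronecker block with standard basis e₁,…,e_{k−1}, f₁,…,f_k (k = m+1), Ker(A + λB) = span(f_k − λ f_{k−1} + λ² f_{k−2} − ⋯).) -/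
/-- The `m × (m+1)` matrix `P(λ)` with `P(λ)(i,i) = 1`, `P(λ)(i,i+1) = λ` and all
other entries `0`. -/
def Pmat (m : ℕ) (lam : ℂ) : Matrix (Fin m) (Fin (m + 1)) ℂ :=
  fun i j =>
    if (j : ℕ) = (i : ℕ) then 1 else if (j : ℕ) = (i : ℕ) + 1 then lam else 0

/-- The `(2m+1) × (2m+1)` Kronecker block `A + λB` in block form. -/
def Mk (m : ℕ) (lam : ℂ) :
    Matrix (Fin m ⊕ Fin (m + 1)) (Fin m ⊕ Fin (m + 1)) ℂ :=
  Matrix.fromBlocks 0 (Pmat m lam) (-(Pmat m lam).transpose) 0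

lemma mulVec_inl (m : ℕ) (lam : ℂ) (v : Fin m ⊕ Fin (m+1) → ℂ) (i : Fin m) :
    (Mk m lam).mulVec v (Sum.inl i) = ∑ j, Pmat m lam i j * v (Sum.inr j) := by
  simp [Mk, Matrix.mulVec, dotProduct, Fintype.sum_sum_type, Matrix.fromBlocks]

lemma mulVec_inr (m : ℕ) (lam : ℂ) (v : Fin m ⊕ Fin (m+1) → ℂ) (j : Fin (m+1)) :
    (Mk m lam).mulVec v (Sum.inr j) = -∑ i, Pmat m lam i j * v (Sum.inl i) := by
  simp [Mk, Matrix.mulVec, dotProduct, Fintype.sum_sum_type, Matrix.fromBlocks,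
    Matrix.transpose, neg_mul, Finset.sum_neg_distrib]

lemma rowSum (m : ℕ) (lam : ℂ) (x : Fin (m+1) → ℂ) (i : Fin m) :
    ∑ j, Pmat m lam i j * x j = x i.castSucc + lam * x i.succ := by
  have : ∀ j : Fin (m+1), Pmat m lam i j * x j =
      (if j = i.castSucc then x j else 0) + (if j = i.succ then lam * x j else 0) := by
    intro j
    simp only [Pmat, Fin.ext_iff, Fin.coe_castSucc, Fin.val_succ]
    split_ifs <;> first | omega | ring
  rw [Finset.sum_congr rfl (fun j _ => this j), Finset.sum_add_distrib,
    Finset.sum_ite_eq' Finset.univ, Finset.sum_ite_eq' Finset.univ]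
  simp

lemma colSum0 (m : ℕ) (lam : ℂ) (x : Fin m → ℂ) (hm : 0 < m) :
    ∑ i, Pmat m lam i 0 * x i = x ⟨0, hm⟩ := by
  have : ∀ i : Fin m, Pmat m lam i (0 : Fin (m+1)) * x i =
      (if i = ⟨0, hm⟩ then x i else 0) := by
    intro i
    simp only [Pmat, Fin.ext_iff, Fin.val_zero]
    split_ifs
    any_goals ring
    any_goals omega
    any_goals exact (‹False›).elim
  rw [Finset.sum_congr rfl (fun i _ => this i), Finset.sum_ite_eq' Finset.univ]
  simp

lemma colSumSucc (m : ℕ) (lam : ℂ) (x : Fin m → ℂ) (n : ℕ) (h : n + 1 < m) :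
    ∑ i, Pmat m lam i ⟨n+1, by omega⟩ * x i
      = x ⟨n+1, h⟩ + lam * x ⟨n, by omega⟩ := by
  have : ∀ i : Fin m, Pmat m lam i (⟨n+1, by omega⟩ : Fin (m+1)) * x i =
      (if i = ⟨n+1, h⟩ then x i else 0) + (if i = ⟨n, by omega⟩ then lam * x i else 0) := by
    intro i
    simp only [Pmat, Fin.ext_iff]
    split_ifs <;> first | omega | ring
  rw [Finset.sum_congr rfl (fun i _ => this i), Finset.sum_add_distrib,
    Finset.sum_ite_eq' Finset.univ, Finset.sum_ite_eq' Finset.univ]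
  simp


/-- Proposition 2.2(2): the kernel of the Kronecker block `A + λB` is spanned by
`f_k − λ f_{k−1} + λ² f_{k−2} − ⋯`, i.e. the vector with components `(−λ)^{m − j}`
in the second block. -/
theorem stmt_9 (m : ℕ) (lam : ℂ) :
    ∀ v : Fin m ⊕ Fin (m + 1) → ℂ,
      (Mk m lam).mulVec v = 0 ↔
      ∃ c : ℂ, v = c •
        Sum.elim (fun _ : Fin m => (0 : ℂ))
          (fun j : Fin (m + 1) => (-lam) ^ (m - (j : ℕ))) := by
  intro v
  constructor
  · intro h
    refine ⟨v (Sum.inr (Fin.last m)), ?_⟩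
    have heq : ∀ k, (Mk m lam).mulVec v k = 0 := fun k => congrFun h k
    have hv1 : ∀ n (hn : n < m), v (Sum.inl ⟨n, hn⟩) = 0 := by
      intro n
      induction n with
      | zero =>
        intro hn
        have := heq (Sum.inr 0)
        rw [mulVec_inr, colSum0 m lam _ hn] at this
        linear_combination -this
      | succ n ih =>
        intro hn
        have := heq (Sum.inr ⟨n+1, by omega⟩)
        rw [mulVec_inr, colSumSucc m lam _ n hn] at this
        have h0 := ih (by omega)
        rw [h0] at this
        linear_combination -this
    have hv2 : ∀ d (hd : d ≤ m),
        v (Sum.inr ⟨m - d, by omega⟩) = (-lam)^d * v (Sum.inr (Fin.last m)) := by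
      intro d
      induction d with
      | zero =>
        intro _
        simp [Fin.last]
      | succ d ih =>
        intro hd
        have := heq (Sum.inl ⟨m - (d+1), by omega⟩)
        rw [mulVec_inl, rowSum] at this
        have hcs : (⟨m - (d+1), by omega⟩ : Fin m).castSucc = ⟨m - (d+1), by omega⟩ := by
          simp [Fin.castSucc, Fin.ext_iff]
        have hsc : (⟨m - (d+1), by omega⟩ : Fin m).succ = ⟨m - d, by omega⟩ := by
          simp [Fin.succ, Fin.ext_iff]; omega
        rw [hcs, hsc, ih (by omega)] at this
        rw [pow_succ]
        linear_combination this
    funext k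
    cases k with
    | inl i =>
      simpa using hv1 i.1 i.2
    | inr j =>
      have hj : j ≤ Fin.last m := Fin.le_last j
      have := hv2 (m - j.1) (by omega)
      have hjj : (⟨m - (m - j.1), by omega⟩ : Fin (m+1)) = j := by
        simp [Fin.ext_iff]; omega
      rw [hjj] at this
      simpa [mul_comm] using this
  · rintro ⟨c, rfl⟩
    funext k
    cases k with
    | inl i =>
      rw [mulVec_inl, rowSum]
      have h1 : m - (i.castSucc : ℕ) = (m - ((i : ℕ) + 1)) + 1 := by
        have := i.isLt; simp [Fin.coe_castSucc]; omega
      simp only [Pi.smul_apply, Sum.elim_inr, smul_eq_mul, Fin.coe_castSucc, Fin.val_succ,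
        Pi.zero_apply]
      rw [show m - (i : ℕ) = (m - ((i : ℕ) + 1)) + 1 from by have := i.isLt; omega, pow_succ]
      ring
    | inr j =>
      rw [mulVec_inr]
      simp
end

section
/- Let m ≥ 0 and let M(λ) be the (2m+1) × (2m+1) Kronecker-block matrix. Let N ≥ 1, let λ : Fin N → ℂ be injective (N distinct values), and let v : Fin N → (Fin m ⊕ Fin (m+1) → ℂ) be such that for every i, v(i) ≠ 0 and M(λ(i)).mulVec (v(i)) = 0. Then the family (v(i)) is linearly independent over ℂ if and only if N ≤ m + 1. (Proposition 2.4 of the paper: for the (2k−1) × (2k−1) Kronecker block, nonzero vectors in Ker A_{λᵢ} for N distinct values λᵢ are linearly independent if and only if N ≤ k, where k = m+1 is the Kronecker index.) -/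

lemma Pmat_eq (m : ℕ) (lam : ℂ) (a : Fin m) (j : Fin (m+1)) :
    Pmat m lam a j = (if j = a.castSucc then 1 else 0) + (if j = a.succ then lam else 0) := by
  simp only [Pmat, Fin.ext_iff, Fin.coe_castSucc, Fin.val_succ]
  split_ifs <;> first | omega | ring

lemma row1 (m : ℕ) (lam : ℂ) (w : Fin m ⊕ Fin (m+1) → ℂ)
    (h : (Mk m lam).mulVec w = 0) (a : Fin m) :
    w (Sum.inr a.castSucc) + lam * w (Sum.inr a.succ) = 0 := by
  have := congrFun h (Sum.inl a)
  simp only [Mk, Matrix.mulVec, dotProduct, Fintype.sum_sum_type,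
    Matrix.fromBlocks_apply₁₁, Matrix.fromBlocks_apply₁₂, Matrix.zero_apply, zero_mul,
    Finset.sum_const_zero, zero_add, Pi.zero_apply] at this
  rw [Finset.sum_congr rfl (fun j _ => by rw [Pmat_eq, add_mul])] at this
  rw [Finset.sum_add_distrib] at this
  simpa [Finset.sum_ite_eq', mul_comm] using this

lemma row2 (m : ℕ) (lam : ℂ) (w : Fin m ⊕ Fin (m+1) → ℂ)
    (h : (Mk m lam).mulVec w = 0) (j : Fin (m+1)) :
    (∑ b : Fin m, (if j = b.castSucc then w (Sum.inl b) else 0)) +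
      lam * (∑ b : Fin m, (if j = b.succ then w (Sum.inl b) else 0)) = 0 := by
  have := congrFun h (Sum.inr j)
  simp only [Mk, Matrix.mulVec, dotProduct, Fintype.sum_sum_type,
    Matrix.fromBlocks_apply₂₁, Matrix.fromBlocks_apply₂₂, Matrix.zero_apply, zero_mul,
    Finset.sum_const_zero, add_zero, Pi.zero_apply, Matrix.neg_apply, Matrix.transpose_apply,
    neg_mul] at this
  rw [Finset.sum_congr rfl (fun b _ => by rw [Pmat_eq, add_mul, neg_add]),
    Finset.sum_add_distrib, Finset.sum_neg_distrib, Finset.sum_neg_distrib] at this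
  have e1 : ∀ b : Fin m, (if j = b.castSucc then (1:ℂ) else 0) * w (Sum.inl b)
      = (if j = b.castSucc then w (Sum.inl b) else 0) := by
    intro b; split_ifs <;> ring
  have e2 : ∀ b : Fin m, (if j = b.succ then lam else 0) * w (Sum.inl b)
      = lam * (if j = b.succ then w (Sum.inl b) else 0) := by
    intro b; split_ifs <;> ring
  rw [Finset.sum_congr rfl (fun b _ => e1 b), Finset.sum_congr rfl (fun b _ => e2 b),
    ← Finset.mul_sum] at this
  linear_combination -this

lemma xzero (m : ℕ) (lam : ℂ) (w : Fin m ⊕ Fin (m+1) → ℂ)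
    (h : (Mk m lam).mulVec w = 0) : ∀ b : Fin m, w (Sum.inl b) = 0 := by
  suffices H : ∀ n, ∀ b : Fin m, (b : ℕ) ≤ n → w (Sum.inl b) = 0 by
    intro b; exact H b b le_rfl
  intro n
  induction n with
  | zero =>
    intro b hb0
    have h2 := row2 m lam w h b.castSucc
    have e1 : (∑ b' : Fin m, (if b.castSucc = b'.castSucc then w (Sum.inl b') else 0))
        = w (Sum.inl b) := by
      simp [Fin.castSucc_inj, eq_comm]
    rw [e1] at h2
    have e2 : (∑ b' : Fin m, (if b.castSucc = b'.succ then w (Sum.inl b') else 0)) = 0 := by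
      apply Finset.sum_eq_zero
      intro b' _
      rw [if_neg]
      simp only [Fin.ext_iff, Fin.coe_castSucc, Fin.val_succ]
      omega
    rw [e2] at h2; simpa using h2
  | succ n IH =>
    intro b hbn
    have h2 := row2 m lam w h b.castSucc
    have e1 : (∑ b' : Fin m, (if b.castSucc = b'.castSucc then w (Sum.inl b') else 0))
        = w (Sum.inl b) := by
      simp [Fin.castSucc_inj, eq_comm]
    rw [e1] at h2
    rcases Nat.eq_zero_or_pos (b : ℕ) with hb | hb
    · have e2 : (∑ b' : Fin m, (if b.castSucc = b'.succ then w (Sum.inl b') else 0)) = 0 := by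
        apply Finset.sum_eq_zero
        intro b' _
        rw [if_neg]
        simp only [Fin.ext_iff, Fin.coe_castSucc, Fin.val_succ]
        omega
      rw [e2] at h2; simpa using h2
    · have hlt : (b : ℕ) - 1 < m := by omega
      set b' : Fin m := ⟨(b : ℕ) - 1, hlt⟩ with hb'
      have e2 : (∑ c : Fin m, (if b.castSucc = c.succ then w (Sum.inl c) else 0))
          = w (Sum.inl b') := by
        rw [Finset.sum_eq_single b']
        · rw [if_pos]
          simp only [Fin.ext_iff, Fin.coe_castSucc, Fin.val_succ, hb']
          omega
        · intro c _ hc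
          rw [if_neg]
          intro habs
          apply hc
          simp only [Fin.ext_iff, Fin.coe_castSucc, Fin.val_succ, hb'] at habs ⊢
          omega
        · intro habs
          exact absurd (Finset.mem_univ _) habs
      rw [e2, IH b' (by simp [hb']; omega)] at h2
      simpa using h2

lemma ykey (m : ℕ) (lam : ℂ) (w : Fin m ⊕ Fin (m+1) → ℂ)
    (h : (Mk m lam).mulVec w = 0) (j : Fin (m+1)) :
    w (Sum.inr j) = (-lam)^(m - (j : ℕ)) * w (Sum.inr (Fin.last m)) := by
  suffices H : ∀ t, t ≤ m → w (Sum.inr ⟨m - t, by omega⟩) =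
      (-lam)^t * w (Sum.inr (Fin.last m)) by
    have hj : (j : ℕ) ≤ m := by omega
    have := H (m - (j : ℕ)) (by omega)
    have hjj : (⟨m - (m - (j : ℕ)), by omega⟩ : Fin (m+1)) = j := by
      simp only [Fin.ext_iff]; omega
    rwa [hjj] at this
  intro t
  induction t with
  | zero => intro _; simp [Fin.last]
  | succ t IH =>
    intro ht
    have a : Fin m := ⟨m - t - 1, by omega⟩
    have h1 := row1 m lam w h ⟨m - t - 1, by omega⟩
    have ecs : (⟨m - t - 1, by omega⟩ : Fin m).castSucc = (⟨m - (t+1), by omega⟩ : Fin (m+1)) := by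
      simp only [Fin.ext_iff, Fin.coe_castSucc]; omega
    have esu : (⟨m - t - 1, by omega⟩ : Fin m).succ = (⟨m - t, by omega⟩ : Fin (m+1)) := by
      simp only [Fin.ext_iff, Fin.val_succ]; omega
    rw [ecs, esu, IH (by omega)] at h1
    have : w (Sum.inr ⟨m - (t+1), by omega⟩) = -lam * ((-lam)^t * w (Sum.inr (Fin.last m))) := by
      linear_combination h1
    rw [this]; ring

/-- Proposition 2.4: nonzero kernel vectors of the `(2m+1) × (2m+1)` Kronecker block
for `N` distinct values `λᵢ` are linearly independent iff `N ≤ m + 1` (the Kronecker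
index). -/
theorem stmt_10 (m N : ℕ) (hN : 1 ≤ N) (lam : Fin N → ℂ)
    (hinj : Function.Injective lam)
    (v : Fin N → (Fin m ⊕ Fin (m + 1) → ℂ))
    (hv0 : ∀ i, v i ≠ 0)
    (hker : ∀ i, (Mk m (lam i)).mulVec (v i) = 0) :
    LinearIndependent ℂ v ↔ N ≤ m + 1 := by
  set c : Fin N → ℂ := fun i => v i (Sum.inr (Fin.last m)) with hc_def
  have hc : ∀ i, c i ≠ 0 := by
    intro i hci
    apply hv0 i
    funext z
    cases z with
    | inl a => exact xzero m (lam i) (v i) (hker i) a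
    | inr j =>
      have h0 : v i (Sum.inr (Fin.last m)) = 0 := hci
      rw [ykey m (lam i) (v i) (hker i) j, h0, mul_zero]
      rfl
  set u : Fin N → (Fin (m+1) → ℂ) := fun i j => v i (Sum.inr j) with hu_def
  have hu : ∀ i j, u i j = (-(lam i))^(m - (j:ℕ)) * c i := by
    intro i j
    exact ykey m (lam i) (v i) (hker i) j
  have key : LinearIndependent ℂ v ↔ LinearIndependent ℂ u := by
    constructor
    · intro H
      rw [Fintype.linearIndependent_iff] at H ⊢
      intro g hg i
      apply H g _ i
      funext z
      cases z with
      | inl a =>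
        simp only [Finset.sum_apply, Pi.smul_apply, smul_eq_mul, Pi.zero_apply]
        rw [Finset.sum_eq_zero]
        intro i' _
        rw [xzero m (lam i') (v i') (hker i') a, mul_zero]
      | inr j =>
        have := congrFun hg j
        simpa [Finset.sum_apply] using this
    · intro H
      exact H.of_comp (LinearMap.funLeft ℂ ℂ Sum.inr)
  rw [key]
  constructor
  · intro H
    have := H.fintype_card_le_finrank
    simpa using this
  · intro hNm
    rw [Fintype.linearIndependent_iff]
    intro g hg i
    set μ : Fin N → ℂ := fun i => -(lam i) with hμ
    have hμinj : Function.Injective μ := fun a b hab => hinj (by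
      simpa [hμ, neg_inj] using hab)
    set d : Fin N → ℂ := fun i => g i * c i with hd
    have hdV : Matrix.vecMul d (Matrix.vandermonde μ) = 0 := by
      funext k
      simp only [Pi.zero_apply]
      have hkm : (k : ℕ) ≤ m := by omega
      have hj := congrFun hg ⟨m - (k : ℕ), by omega⟩
      simp only [Finset.sum_apply, Pi.smul_apply, smul_eq_mul, Pi.zero_apply] at hj
      rw [Matrix.vecMul, dotProduct]
      simp only [Matrix.vandermonde]
      rw [← hj]
      apply Finset.sum_congr rfl
      intro i' _
      rw [hu]
      simp only [hd, Matrix.of_apply, hμ]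
      have : m - (m - (k : ℕ)) = (k : ℕ) := by omega
      rw [this]
      ring
    have hdet : IsUnit (Matrix.vandermonde μ).det := by
      rw [Matrix.det_vandermonde]
      apply IsUnit.mk0
      apply Finset.prod_ne_zero_iff.mpr
      intro a _
      apply Finset.prod_ne_zero_iff.mpr
      intro b hb
      simp only [Finset.mem_Ioi] at hb
      exact sub_ne_zero_of_ne fun h => absurd (hμinj h) (ne_of_gt hb)
    have hd0 : d = 0 := by
      have hinj := Matrix.vecMul_injective_iff_isUnit.mpr
        ((Matrix.isUnit_iff_isUnit_det _).mpr hdet)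
      exact hinj (hdV.trans (Matrix.zero_vecMul _).symm)
    have := congrFun hd0 i
    simp only [hd, Pi.zero_apply, mul_eq_zero] at this
    exact this.resolve_right (hc i)
end

section
/- Let m ≥ 0 and let z : Fin (m+1) → ℂ with z(j) ≠ 0 for all j. Let Y(z) be the m × (m+1) matrix with Y(z)(i, 0) = z(0), Y(z)(i, i+1) = z(i+1), and all other entries 0, and let N(z) = fromBlocks 0 (Y(z)) (−Y(z)ᵀ) 0 be the corresponding (2m+1) × (2m+1) skew-symmetric matrix (rows and columns indexed by Fin m ⊕ Fin (m+1)). Then the kernel of N(z) is the one-dimensional subspace spanned by the vector w with w(inl i) = 0, w(inr 0) = −∏_{j ≠ 0} z(j), and w(inr j) = ∏_{i ≠ j} z(i) for j ≠ 0. (This is the kernel computation underlying Theorem 3.2 of the paper: for the solvable Lie algebra with basis g₁,…,g_m, h₀,…,h_m and relations [gᵢ,h₀] = h₀, [gᵢ,hᵢ] = hᵢ, taking z(j) = y_j − λ b_j shows that dim Ker(𝒜_x + λ𝒜_a) = 1 for all regular λ, so the Jordan–Kronecker invariants of this Lie algebra consist of a single Kronecker block of size (2m+1) × (2m+1).) 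-/
/-- The `m × (m+1)` matrix `Y(z)` with `Y(z)(i,0) = z(0)`, `Y(z)(i,i+1) = z(i+1)`
and all other entries `0`. -/
def Ymat (m : ℕ) (z : Fin (m + 1) → ℂ) : Matrix (Fin m) (Fin (m + 1)) ℂ :=
  fun i j =>
    if (j : ℕ) = 0 then z 0 else if (j : ℕ) = (i : ℕ) + 1 then z j else 0

/-- The `(2m+1) × (2m+1)` skew-symmetric matrix `N(z)` in block form. -/
def Nmat (m : ℕ) (z : Fin (m + 1) → ℂ) :
    Matrix (Fin m ⊕ Fin (m + 1)) (Fin m ⊕ Fin (m + 1)) ℂ :=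
  Matrix.fromBlocks 0 (Ymat m z) (-(Ymat m z).transpose) 0

lemma Nmul_inl (m : ℕ) (z : Fin (m+1) → ℂ) (v : Fin m ⊕ Fin (m+1) → ℂ) (i : Fin m) :
    (Nmat m z).mulVec v (Sum.inl i) =
      z 0 * v (Sum.inr 0) + z i.succ * v (Sum.inr i.succ) := by
  classical
  have key : ∀ j : Fin (m+1),
      Ymat m z i j * v (Sum.inr j) =
        (if j = 0 then z 0 * v (Sum.inr 0) else 0)
        + (if j = i.succ then z i.succ * v (Sum.inr i.succ) else 0) := by
    intro j
    rcases eq_or_ne j 0 with h0 | h0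
    · subst h0
      simp [Ymat, (Fin.succ_ne_zero i).symm]
    · rcases eq_or_ne j i.succ with h1 | h1
      · subst h1
        simp [Ymat, h0, Fin.val_succ, Fin.val_eq_zero, Fin.succ_ne_zero]
      · have h0' : (j : ℕ) ≠ 0 := fun h => h0 (Fin.ext h)
        have h1' : (j : ℕ) ≠ (i : ℕ) + 1 := by
          intro h
          exact h1 (Fin.ext (by simpa [Fin.val_succ] using h))
        simp [Ymat, h0, h1, h0', h1']
  simp only [Nmat, Matrix.mulVec, dotProduct, Fintype.sum_sum_type,
    Matrix.fromBlocks_apply₁₁, Matrix.fromBlocks_apply₁₂, Matrix.zero_apply,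
    zero_mul, Finset.sum_const_zero, zero_add]
  rw [Finset.sum_congr rfl (fun j _ => key j), Finset.sum_add_distrib]
  simp

lemma Nmul_inr (m : ℕ) (z : Fin (m+1) → ℂ) (v : Fin m ⊕ Fin (m+1) → ℂ) (j : Fin (m+1)) :
    (Nmat m z).mulVec v (Sum.inr j) =
      -∑ i : Fin m, Ymat m z i j * v (Sum.inl i) := by
  simp [Nmat, Matrix.mulVec, dotProduct, Fintype.sum_sum_type, mul_comm]

/-- The kernel computation underlying Theorem 3.2: if all `z(j) ≠ 0`, the kernel of
`N(z)` is spanned by the vector `w` with `w(inr 0) = −∏_{j≠0} z(j)` and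
`w(inr j) = ∏_{i≠j} z(i)` for `j ≠ 0` (and vanishing first block). -/
theorem stmt_11 (m : ℕ) (z : Fin (m + 1) → ℂ) (hz : ∀ j, z j ≠ 0) :
    ∀ v : Fin m ⊕ Fin (m + 1) → ℂ,
      (Nmat m z).mulVec v = 0 ↔
      ∃ c : ℂ, v = c •
        Sum.elim (fun _ : Fin m => (0 : ℂ))
          (fun j : Fin (m + 1) =>
            if j = 0 then -(∏ i ∈ Finset.univ.erase (0 : Fin (m + 1)), z i)
            else ∏ i ∈ Finset.univ.erase j, z i) := by
  classical
  intro v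
  set P0 := ∏ i ∈ Finset.univ.erase (0 : Fin (m + 1)), z i with hP0def
  set w : Fin m ⊕ Fin (m + 1) → ℂ :=
    Sum.elim (fun _ : Fin m => (0 : ℂ))
      (fun j : Fin (m + 1) =>
        if j = 0 then -P0
        else ∏ i ∈ Finset.univ.erase j, z i) with hw
  have hP0 : P0 ≠ 0 := Finset.prod_ne_zero_iff.2 fun i _ => hz i
  have hprod : ∀ j : Fin (m+1),
      z j * ∏ i ∈ Finset.univ.erase j, z i = ∏ i, z i := fun j =>
    Finset.mul_prod_erase _ _ (Finset.mem_univ j)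
  constructor
  · intro h
    have hinl : ∀ k : Fin m, v (Sum.inl k) = 0 := by
      intro k
      have h1 := congrFun h (Sum.inr k.succ)
      rw [Nmul_inr] at h1
      have hY : ∀ i : Fin m, Ymat m z i k.succ * v (Sum.inl i) =
          if i = k then z k.succ * v (Sum.inl k) else 0 := by
        intro i
        rcases eq_or_ne i k with rfl | hik
        · simp [Ymat, Fin.val_succ]
        · have hki : (k : ℕ) ≠ (i : ℕ) := fun hh => hik (Fin.ext hh.symm)
          simp [Ymat, Fin.val_succ, hki, hik]
      rw [Finset.sum_congr rfl (fun i _ => hY i), Finset.sum_ite_eq' Finset.univ k] at h1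
      simp at h1
      rcases h1 with h1 | h1
      · exact absurd h1 (hz _)
      · exact h1
    have heq : ∀ i : Fin m,
        z 0 * v (Sum.inr 0) + z i.succ * v (Sum.inr i.succ) = 0 := by
      intro i
      have h2 := congrFun h (Sum.inl i)
      rw [Nmul_inl] at h2
      simpa using h2
    refine ⟨v (Sum.inr 0) / (-P0), ?_⟩
    funext x
    rcases x with i | j
    · simp [hw, hinl i]
    · induction j using Fin.cases with
      | zero =>
        simp only [hw, Pi.smul_apply, Sum.elim_inr, smul_eq_mul]
        simp only [if_true]
        rw [div_mul_cancel₀ _ (neg_ne_zero.2 hP0)]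
      | succ i =>
        have hs0 : (i.succ : Fin (m+1)) ≠ 0 := Fin.succ_ne_zero i
        simp only [hw, Pi.smul_apply, Sum.elim_inr, smul_eq_mul]
        rw [if_neg hs0]
        have h3 : z i.succ * v (Sum.inr i.succ) = -(z 0 * v (Sum.inr 0)) := by
          linear_combination heq i
        refine mul_left_cancel₀ (hz i.succ) ?_
        rw [h3]
        have hs := hprod i.succ
        have h0 := hprod (0 : Fin (m+1))
        rw [← hP0def] at h0
        calc -(z 0 * v (Sum.inr 0))
            = z 0 * v (Sum.inr 0) * (P0 / (-P0)) := by
              rw [div_neg, div_self hP0]; ring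
          _ = v (Sum.inr 0) / (-P0) * (z 0 * P0) := by ring
          _ = v (Sum.inr 0) / (-P0) *
              (z i.succ * ∏ k ∈ Finset.univ.erase i.succ, z k) := by rw [h0, hs]
          _ = z i.succ * (v (Sum.inr 0) / (-P0) *
              ∏ k ∈ Finset.univ.erase i.succ, z k) := by ring
  · rintro ⟨c, rfl⟩
    funext x
    rcases x with i | j
    · rw [show ((0 : Fin m ⊕ Fin (m+1) → ℂ) (Sum.inl i)) = 0 from rfl, Nmul_inl]
      have hs0 : (i.succ : Fin (m+1)) ≠ 0 := Fin.succ_ne_zero i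
      simp only [hw, Pi.smul_apply, Sum.elim_inr, smul_eq_mul]
      simp only [if_true]
      rw [if_neg hs0]
      have h0 := hprod (0 : Fin (m+1))
      rw [← hP0def] at h0
      linear_combination (-c) * h0 + c * hprod i.succ
    · rw [show ((0 : Fin m ⊕ Fin (m+1) → ℂ) (Sum.inr j)) = 0 from rfl, Nmul_inr]
      simp [hw]
end

section
/- Let s ≥ 1 and n : Fin s → ℕ with n(i) ≥ 1 for every i. Let V be the free complex vector space with basis consisting of e₀, f₀ and elements e^i_j, f^i_j for i ∈ Fin s and 1 ≤ j ≤ n(i). Define a bracket on basis vectors by (with the conventions e^i_0 := e₀ and f^i_0 := f₀): ⁅e^i_j, f^i_k⁆ = e^i_{j−k} whenever 0 ≤ k ≤ j ≤ n(i) (in particular ⁅e^i_j, f^i_j⁆ = e₀ and ⁅e^i_j, f₀⁆ = e^i_j), ⁅f^i_k, e^i_j⁆ = −e^i_{j−k} for the same range, and all other brackets of basis vectors equal to 0 (e's bracket e's to 0, f's bracket f's to 0, elements with different upper index i commute, and ⁅e^i_j, f^i_k⁆ = 0 for j < k). Then this bracket makes V a complex Lie algebra. (The Lie-algebra structure asserted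 in Theorem 4.2 of the paper, which realizes one Jordan tuple with a unique maximum J_λ(2n₁+2, 2n₂, …, 2n_s).) -/
/-- Basis of the free vector space: `e₀`, `f₀` and `e^i_{j+1}`, `f^i_{j+1}` for
`i ∈ Fin s`, `j ∈ Fin (n i)` (so `e i j` represents `e^i_{j+1}`, `1 ≤ j+1 ≤ n(i)`). -/
inductive B12 (s : ℕ) (n : Fin s → ℕ) : Type
  | e0 : B12 s n
  | f0 : B12 s n
  | e (i : Fin s) (j : Fin (n i)) : B12 s n
  | f (i : Fin s) (j : Fin (n i)) : B12 s n

/-- `Evec s n i m` is the basis vector `e^i_m`, with the convention `e^i_0 = e₀`. -/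
noncomputable def Evec (s : ℕ) (n : Fin s → ℕ) (i : Fin s) : ℕ → (B12 s n →₀ ℂ)
  | 0 => Finsupp.single B12.e0 1
  | m + 1 => if h : m < n i then Finsupp.single (B12.e i ⟨m, h⟩) 1 else 0

/-- The bracket on basis vectors: `⁅e^i_j, f^i_k⁆ = e^i_{j−k}` for `0 ≤ k ≤ j ≤ n(i)`
(with the conventions `e^i_0 = e₀`, `f^i_0 = f₀`), its antisymmetric counterparts, and
all other brackets of basis vectors equal to `0`. Basis elements `e i j`, `f i j`
represent `e^i_{j+1}`, `f^i_{j+1}`. -/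
noncomputable def br12 (s : ℕ) (n : Fin s → ℕ) :
    B12 s n → B12 s n → (B12 s n →₀ ℂ)
  | B12.e i j, B12.f i' k =>
      if i = i' then
        (if (k : ℕ) ≤ (j : ℕ) then Evec s n i ((j : ℕ) - (k : ℕ)) else 0)
      else 0
  | B12.f i' k, B12.e i j =>
      if i = i' then
        (if (k : ℕ) ≤ (j : ℕ) then -Evec s n i ((j : ℕ) - (k : ℕ)) else 0)
      else 0
  | B12.e0, B12.f0 => Finsupp.single B12.e0 1
  | B12.f0, B12.e0 => -Finsupp.single B12.e0 1
  | B12.e i j, B12.f0 => Finsupp.single (B12.e i j) 1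
  | B12.f0, B12.e i j => -Finsupp.single (B12.e i j) 1
  | _, _ => 0

/-- The unique bilinear extension of a bracket prescribed on basis vectors. -/
noncomputable def brExt {B : Type*} (br : B → B → (B →₀ ℂ)) :
    (B →₀ ℂ) →ₗ[ℂ] (B →₀ ℂ) →ₗ[ℂ] (B →₀ ℂ) :=
  Finsupp.lift ((B →₀ ℂ) →ₗ[ℂ] (B →₀ ℂ)) ℂ B
    fun b₁ => Finsupp.lift (B →₀ ℂ) ℂ B fun b₂ => br b₁ b₂


open Finsupp

lemma brExt_single {B : Type*} (br : B → B → (B →₀ ℂ)) (a b : B) :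
    brExt br (Finsupp.single a 1) (Finsupp.single b 1) = br a b := by
  simp [brExt, Finsupp.lift_apply, Finsupp.sum_single_index]

variable {s : ℕ} {n : Fin s → ℕ}

lemma br12_antisym (a b : B12 s n) : br12 s n a b = -br12 s n b a := by
  cases a <;> cases b <;> simp [br12] <;> split_ifs <;> simp

lemma L_e0 (i : Fin s) (m : ℕ) :
    brExt (br12 s n) (Finsupp.single (B12.e0 : B12 s n) 1) (Evec s n i m) = 0 := by
  cases m with
  | zero => rw [Evec, brExt_single]; simp [br12]
  | succ m =>
    rw [Evec]; split_ifs with h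
    · rw [brExt_single]; simp [br12]
    · simp

lemma L_e (i' : Fin s) (j' : Fin (n i')) (i : Fin s) (m : ℕ) :
    brExt (br12 s n) (Finsupp.single (B12.e i' j' : B12 s n) 1) (Evec s n i m) = 0 := by
  cases m with
  | zero => rw [Evec, brExt_single]; simp [br12]
  | succ m =>
    rw [Evec]; split_ifs with h
    · rw [brExt_single]; simp [br12]
    · simp

lemma L_f0 (i : Fin s) (m : ℕ) :
    brExt (br12 s n) (Finsupp.single (B12.f0 : B12 s n) 1) (Evec s n i m)
      = -Evec s n i m := by
  cases m with
  | zero => rw [Evec, brExt_single]; simp [br12, Evec]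
  | succ m =>
    rw [Evec]; split_ifs with h
    · rw [brExt_single]; simp [br12, Evec, h]
    · simp [Evec, h]

lemma L_f (i' : Fin s) (k : Fin (n i')) (i : Fin s) (m : ℕ) (hm : m ≤ n i) :
    brExt (br12 s n) (Finsupp.single (B12.f i' k : B12 s n) 1) (Evec s n i m)
      = if i = i' then
          (if (k : ℕ) + 1 ≤ m then -Evec s n i (m - ((k : ℕ) + 1)) else 0)
        else 0 := by
  cases m with
  | zero => rw [Evec, brExt_single]; simp [br12]
  | succ m =>
    have h : m < n i := hm
    rw [Evec, dif_pos h, brExt_single]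
    show (if i = i' then (if (k:ℕ) ≤ m then -Evec s n i (m - (k:ℕ)) else 0) else 0) = _
    congr 1
    rw [Nat.succ_sub_succ]
    by_cases hk : (k:ℕ) ≤ m
    · rw [if_pos hk, if_pos (by omega)]
    · rw [if_neg hk, if_neg (by omega)]

lemma Br_e0_out (b c : B12 s n) :
    brExt (br12 s n) (Finsupp.single (B12.e0 : B12 s n) 1) (br12 s n b c) = 0 := by
  cases b <;> cases c <;>
    simp only [br12, map_zero, map_neg, apply_ite
        (brExt (br12 s n) (Finsupp.single (B12.e0 : B12 s n) 1))] <;>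
    (try split_ifs) <;>
    first
      | (simp; done)
      | (rw [brExt_single]; simp [br12]; done)
      | (simp [L_e0]; done)

lemma Br_e_out (i : Fin s) (j : Fin (n i)) (b c : B12 s n) :
    brExt (br12 s n) (Finsupp.single (B12.e i j : B12 s n) 1) (br12 s n b c) = 0 := by
  cases b <;> cases c <;>
    simp only [br12, map_zero, map_neg, apply_ite
        (brExt (br12 s n) (Finsupp.single (B12.e i j : B12 s n) 1))] <;>
    (try split_ifs) <;>
    first
      | (simp; done)
      | (rw [brExt_single]; simp [br12]; done)
      | (simp [L_e]; done)

lemma master (i0 : Fin s) (p q r : ℕ) (hp : p ≤ n i0) (x y z : B12 s n)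
    (hx : (Finsupp.single x (1:ℂ)) = Evec s n i0 p)
    (hy : ∀ m, m ≤ n i0 → brExt (br12 s n) (Finsupp.single y 1) (Evec s n i0 m)
        = if q ≤ m then -Evec s n i0 (m - q) else 0)
    (hz : ∀ m, m ≤ n i0 → brExt (br12 s n) (Finsupp.single z 1) (Evec s n i0 m)
        = if r ≤ m then -Evec s n i0 (m - r) else 0)
    (hyz : br12 s n y z = 0) :
    brExt (br12 s n) (Finsupp.single x 1) (br12 s n y z)
    + brExt (br12 s n) (Finsupp.single y 1) (br12 s n z x)
    + brExt (br12 s n) (Finsupp.single z 1) (br12 s n x y) = 0 := by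
  have hzx : br12 s n z x = if r ≤ p then -Evec s n i0 (p - r) else 0 := by
    rw [← brExt_single (br12 s n) z x, hx]; exact hz p hp
  have hyx : br12 s n y x = if q ≤ p then -Evec s n i0 (p - q) else 0 := by
    rw [← brExt_single (br12 s n) y x, hx]; exact hy p hp
  have hxy : br12 s n x y = -br12 s n y x := br12_antisym x y
  rw [hyz, map_zero, zero_add, hxy, hyx, hzx]
  by_cases h1 : r ≤ p
  · rw [if_pos h1]
    by_cases h2 : q ≤ p
    · rw [if_pos h2, map_neg, hy (p - r) (le_trans (Nat.sub_le _ _) hp),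
        neg_neg, hz (p - q) (le_trans (Nat.sub_le _ _) hp)]
      by_cases h3 : q + r ≤ p
      · rw [if_pos (by omega), if_pos (by omega),
          show p - r - q = p - q - r from by omega]
        abel
      · rw [if_neg (by omega), if_neg (by omega)]; simp
    · rw [if_neg h2, map_neg, hy (p - r) (le_trans (Nat.sub_le _ _) hp),
        if_neg (by omega)]
      simp
  · rw [if_neg h1]
    by_cases h2 : q ≤ p
    · rw [if_pos h2, map_zero, neg_neg, hz (p - q) (le_trans (Nat.sub_le _ _) hp),
        if_neg (by omega)]
      simp
    · rw [if_neg h2]; simp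

/-- e-type basis elements. -/
def ET (x : B12 s n) : Prop := x = B12.e0 ∨ ∃ i j, x = B12.e i j
/-- f-type basis elements. -/
def FT (x : B12 s n) : Prop := x = B12.f0 ∨ ∃ i k, x = B12.f i k

lemma cls (x : B12 s n) : ET x ∨ FT x := by
  cases x with
  | e0 => exact Or.inl (Or.inl rfl)
  | e i j => exact Or.inl (Or.inr ⟨i, j, rfl⟩)
  | f0 => exact Or.inr (Or.inl rfl)
  | f i k => exact Or.inr (Or.inr ⟨i, k, rfl⟩)

lemma ET_out {x : B12 s n} (hx : ET x) (b c : B12 s n) :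
    brExt (br12 s n) (Finsupp.single x 1) (br12 s n b c) = 0 := by
  rcases hx with rfl | ⟨i, j, rfl⟩
  · exact Br_e0_out b c
  · exact Br_e_out i j b c

lemma EE_br {x y : B12 s n} (hx : ET x) (hy : ET y) : br12 s n x y = 0 := by
  rcases hx with rfl | ⟨i, j, rfl⟩ <;> rcases hy with rfl | ⟨i', j', rfl⟩ <;> simp [br12]

lemma FF_br {x y : B12 s n} (hx : FT x) (hy : FT y) : br12 s n x y = 0 := by
  rcases hx with rfl | ⟨i, j, rfl⟩ <;> rcases hy with rfl | ⟨i', j', rfl⟩ <;> simp [br12]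

lemma ET_vec (hs : 1 ≤ s) {x : B12 s n} (hx : ET x) :
    ∃ i0 p, p ≤ n i0 ∧ (Finsupp.single x (1:ℂ)) = Evec s n i0 p := by
  rcases hx with rfl | ⟨i, j, rfl⟩
  · exact ⟨⟨0, hs⟩, 0, Nat.zero_le _, by simp [Evec]⟩
  · exact ⟨i, (j : ℕ) + 1, j.isLt, by simp [Evec, j.isLt]⟩

lemma FT_P {x : B12 s n} (hx : FT x) (i0 : Fin s) :
    ∃ q, ∀ m, m ≤ n i0 → brExt (br12 s n) (Finsupp.single x 1) (Evec s n i0 m)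
      = if q ≤ m then -Evec s n i0 (m - q) else 0 := by
  rcases hx with rfl | ⟨i, k, rfl⟩
  · exact ⟨0, fun m hm => by rw [L_f0]; simp⟩
  · by_cases h : i0 = i
    · subst h
      exact ⟨(k : ℕ) + 1, fun m hm => by rw [L_f i0 k i0 m hm, if_pos rfl]⟩
    · exact ⟨n i0 + 1, fun m hm => by
        rw [L_f i k i0 m hm, if_neg h, if_neg (by omega)]⟩

lemma key (hs : 1 ≤ s) (a b c : B12 s n) :
    brExt (br12 s n) (Finsupp.single a 1) (br12 s n b c)
    + brExt (br12 s n) (Finsupp.single b 1) (br12 s n c a)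
    + brExt (br12 s n) (Finsupp.single c 1) (br12 s n a b) = 0 := by
  rcases cls a with ha | ha <;> rcases cls b with hb | hb <;> rcases cls c with hc | hc
  · rw [ET_out ha, ET_out hb, ET_out hc]; simp
  · rw [ET_out ha, ET_out hb, EE_br ha hb]; simp
  · rw [ET_out ha, EE_br hc ha, ET_out hc]; simp
  · obtain ⟨i0, p, hp, hx⟩ := ET_vec hs ha
    obtain ⟨q, hq⟩ := FT_P hb i0
    obtain ⟨r, hr⟩ := FT_P hc i0
    exact master i0 p q r hp a b c hx hq hr (FF_br hb hc)
  · rw [EE_br hb hc, ET_out hb, ET_out hc]; simp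
  · obtain ⟨i0, p, hp, hx⟩ := ET_vec hs hb
    obtain ⟨q, hq⟩ := FT_P hc i0
    obtain ⟨r, hr⟩ := FT_P ha i0
    have h := master i0 p q r hp b c a hx hq hr (FF_br hc ha)
    rw [add_rotate, add_rotate] at h
    exact h
  · obtain ⟨i0, p, hp, hx⟩ := ET_vec hs hc
    obtain ⟨q, hq⟩ := FT_P ha i0
    obtain ⟨r, hr⟩ := FT_P hb i0
    have h := master i0 p q r hp c a b hx hq hr (FF_br ha hb)
    rw [add_rotate] at h
    exact h
  · rw [FF_br hb hc, FF_br hc ha, FF_br ha hb]; simp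

lemma brExt_antisym (x y : B12 s n →₀ ℂ) :
    brExt (br12 s n) x y = -brExt (br12 s n) y x := by
  induction x using Finsupp.induction_linear generalizing y with
  | zero => simp
  | add f g hf hg => simp only [map_add, LinearMap.add_apply, hf, hg]; abel
  | single a ca =>
    induction y using Finsupp.induction_linear with
    | zero => simp
    | add f g hf hg => simp only [map_add, LinearMap.add_apply, hf, hg]; abel
    | single b cb =>
      rw [show (Finsupp.single a ca : B12 s n →₀ ℂ) = ca • Finsupp.single a 1 by
            rw [Finsupp.smul_single, smul_eq_mul, mul_one],
          show (Finsupp.single b cb : B12 s n →₀ ℂ) = cb • Finsupp.single b 1 by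
            rw [Finsupp.smul_single, smul_eq_mul, mul_one]]
      simp only [map_smul, LinearMap.smul_apply, brExt_single, smul_smul]
      rw [br12_antisym a b, mul_comm]
      simp

private lemma add_aux {M : Type*} [AddCommGroup M] {a1 a2 b1 b2 c1 c2 : M}
    (h1 : a1 + b1 + c1 = 0) (h2 : a2 + b2 + c2 = 0) :
    a1 + a2 + (b1 + b2) + (c1 + c2) = 0 := by
  rw [show a1 + a2 + (b1 + b2) + (c1 + c2) = a1 + b1 + c1 + (a2 + b2 + c2) from by abel,
    h1, h2, add_zero]

lemma jac (hs : 1 ≤ s) (x y z : B12 s n →₀ ℂ) :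
    brExt (br12 s n) x (brExt (br12 s n) y z)
    + brExt (br12 s n) y (brExt (br12 s n) z x)
    + brExt (br12 s n) z (brExt (br12 s n) x y) = 0 := by
  induction x using Finsupp.induction_linear generalizing y z with
  | zero => simp
  | add f g hf hg =>
    simp only [map_add, LinearMap.add_apply]
    exact add_aux (hf y z) (hg y z)
  | single a ca =>
    induction y using Finsupp.induction_linear generalizing z with
    | zero => simp
    | add f g hf hg =>
      simp only [map_add, LinearMap.add_apply]
      exact add_aux (hf z) (hg z)
    | single b cb =>
      induction z using Finsupp.induction_linear with
      | zero => simp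
      | add f g hf hg =>
        simp only [map_add, LinearMap.add_apply]
        exact add_aux hf hg
      | single c cc =>
        rw [show (Finsupp.single a ca : B12 s n →₀ ℂ) = ca • Finsupp.single a 1 by
              rw [Finsupp.smul_single, smul_eq_mul, mul_one],
            show (Finsupp.single b cb : B12 s n →₀ ℂ) = cb • Finsupp.single b 1 by
              rw [Finsupp.smul_single, smul_eq_mul, mul_one],
            show (Finsupp.single c cc : B12 s n →₀ ℂ) = cc • Finsupp.single c 1 by
              rw [Finsupp.smul_single, smul_eq_mul, mul_one]]
        simp only [map_smul, LinearMap.smul_apply, brExt_single, smul_smul]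
        rw [show cc * cb * ca = ca * cc * cb from by ring,
            show cb * ca * cc = ca * cc * cb from by ring,
            ← smul_add, ← smul_add, key hs a b c, smul_zero]


/-- Theorem 4.2 (Lie algebra structure): the bilinear extension of the bracket `br12`
on the free complex vector space with basis `B12 s n` is alternating and satisfies the
Jacobi identity, i.e. it makes the space a complex Lie algebra. -/
theorem stmt_12 (s : ℕ) (hs : 1 ≤ s) (n : Fin s → ℕ) (hn : ∀ i, 1 ≤ n i) :
    (∀ x : B12 s n →₀ ℂ, brExt (br12 s n) x x = 0) ∧
    (∀ x y z : B12 s n →₀ ℂ,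
      brExt (br12 s n) x (brExt (br12 s n) y z)
      + brExt (br12 s n) y (brExt (br12 s n) z x)
      + brExt (br12 s n) z (brExt (br12 s n) x y) = 0) := by
  constructor
  · intro x
    have h : (2 : ℂ) • brExt (br12 s n) x x = 0 := by
      rw [two_smul]
      nth_rewrite 2 [brExt_antisym x x]
      simp
    exact (smul_eq_zero.mp h).resolve_left (by norm_num)
  · exact jac hs
end

section
/- Let p ≥ 1, let s(t) ≥ 1 for t ∈ Fin p, let n(t,i) ≥ 1 for i ∈ Fin (s(t)), let d ≥ 0, let c^i_{t,j} ∈ ℂ be arbitrary constants, and let f_t : (Fin d → ℂ) → ℂ be ℂ-differentiable functions. Let ι be the index set P ⊕ Q ⊕ Z, where P and Q are both Σ t, Σ i, Fin (n(t,i)) (labelling coordinates p^i_{t,j} and q^i_{t,j}, 1 ≤ j ≤ n(t,i)) and Z = Fin d (labelling coordinates z₁,…,z_d). Define a skew-symmetric matrix-valued map Π on ℂ^ι by: Π(w)(P(t,i,j), Q(t,i,k)) = w(P(t,i,j−k)) + c^i_{t,j−k} if j > k, = f_t(z-part of w) if j = k, and = 0 if j < k; Π(w)(P(t,i,j), Q(t',i',k))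 = 0 whenever (t,i) ≠ (t',i'); Π(w)(Q-index, P-index) = −Π(w)(P-index, Q-index); and all entries of Π(w) in which both indices lie in P, both lie in Q, or at least one lies in Z, are 0. Then Π satisfies the Jacobi identity of a Poisson structure: for every w ∈ ℂ^ι and all indices u, v, r ∈ ι, Σ_{σ ∈ ι} [ Π(w)(σ, u) · ∂_σΠ(v, r)(w) + Π(w)(σ, v) · ∂_σΠ(r, u)(w) + Π(w)(σ, r) · ∂_σΠ(u, v)(w) ] = 0, where ∂_σ denotes the partial derivative of the entry function in the coordinate σ. (Proposition 5.3 of the paper: the bracket {p^i_{t,j}, q^i_{t,k}} = p^i_{t,j−k} + c^i_{t,j−k} for j > k, = f_t(z) for j = k, with all other brackets of coordinates zero, is a well-defined Poisson bracket.) -/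
/-- The index set `P = Q = Σ t, Σ i, Fin (n t i)` labelling the coordinates
`p^i_{t,j+1}` (resp. `q^i_{t,j+1}`). -/
abbrev PQIdx (p : ℕ) (s : Fin p → ℕ) (n : (t : Fin p) → Fin (s t) → ℕ) : Type :=
  Σ t : Fin p, Σ i : Fin (s t), Fin (n t i)

/-- The full index set `ι = P ⊕ Q ⊕ Z`. -/
abbrev Idx15 (p : ℕ) (s : Fin p → ℕ) (n : (t : Fin p) → Fin (s t) → ℕ) (d : ℕ) :
    Type :=
  PQIdx p s n ⊕ (PQIdx p s n ⊕ Fin d)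

/-- The `P`–`Q` entries of the Poisson matrix:
`Π(P(t,i,j), Q(t,i,k)) = p^i_{t,j−k} + c^i_{t,j−k}` if `j > k`, `= f_t(z)` if `j = k`,
and `0` otherwise (also `0` if the `(t,i)` labels differ). -/
def pqEntry (p : ℕ) (s : Fin p → ℕ) (n : (t : Fin p) → Fin (s t) → ℕ) (d : ℕ)
    (c : (t : Fin p) → (i : Fin (s t)) → Fin (n t i) → ℂ)
    (f : Fin p → (Fin d → ℂ) → ℂ)
    (w : Idx15 p s n d → ℂ) : PQIdx p s n → PQIdx p s n → ℂ
  | ⟨t, i, j⟩, ⟨t', i', k⟩ =>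
    if (⟨t, i⟩ : Σ t : Fin p, Fin (s t)) = ⟨t', i'⟩ then
      if (j : ℕ) = (k : ℕ) then f t (fun z => w (Sum.inr (Sum.inr z)))
      else if (k : ℕ) < (j : ℕ) then
        w (Sum.inl ⟨t, i, ⟨(j : ℕ) - (k : ℕ) - 1,
            Nat.lt_of_le_of_lt (Nat.le_trans (Nat.sub_le _ _) (Nat.sub_le _ _))
              j.isLt⟩⟩)
        + c t i ⟨(j : ℕ) - (k : ℕ) - 1,
            Nat.lt_of_le_of_lt (Nat.le_trans (Nat.sub_le _ _) (Nat.sub_le _ _))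
              j.isLt⟩
      else 0
    else 0

/-- The skew-symmetric matrix `Π(w)` of the Poisson structure: the `P`–`Q` block is
`pqEntry`, the `Q`–`P` block is its negative, and all entries with both indices in
`P`, both in `Q`, or at least one in `Z`, are `0`. -/
def Pi15 (p : ℕ) (s : Fin p → ℕ) (n : (t : Fin p) → Fin (s t) → ℕ) (d : ℕ)
    (c : (t : Fin p) → (i : Fin (s t)) → Fin (n t i) → ℂ)
    (f : Fin p → (Fin d → ℂ) → ℂ)
    (w : Idx15 p s n d → ℂ) : Matrix (Idx15 p s n d) (Idx15 p s n d) ℂ :=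
  fun u v =>
    match u, v with
    | Sum.inl a, Sum.inr (Sum.inl b) => pqEntry p s n d c f w a b
    | Sum.inr (Sum.inl b), Sum.inl a => -pqEntry p s n d c f w a b
    | _, _ => 0

section aux
variable (p : ℕ) (s : Fin p → ℕ) (n : (t : Fin p) → Fin (s t) → ℕ) (d : ℕ)
    (c : (t : Fin p) → (i : Fin (s t)) → Fin (n t i) → ℂ)
    (f : Fin p → (Fin d → ℂ) → ℂ)

def subFin (a : PQIdx p s n) (k : ℕ) : Fin (n a.1 a.2.1) :=
  ⟨(a.2.2 : ℕ) - k - 1,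
    Nat.lt_of_le_of_lt (Nat.le_trans (Nat.sub_le _ _) (Nat.sub_le _ _)) a.2.2.isLt⟩

def dP (a b e : PQIdx p s n) : ℂ :=
  if (⟨a.1, a.2.1⟩ : Σ t : Fin p, Fin (s t)) = ⟨b.1, b.2.1⟩ ∧ (b.2.2 : ℕ) < (a.2.2 : ℕ)
      ∧ e = ⟨a.1, a.2.1, subFin p s n a b.2.2⟩ then 1 else 0

def dEntry (v r σ : Idx15 p s n d) : ℂ :=
  match v, r, σ with
  | Sum.inl a, Sum.inr (Sum.inl b), Sum.inl e => dP p s n a b e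
  | Sum.inr (Sum.inl b), Sum.inl a, Sum.inl e => - dP p s n a b e
  | _, _, _ => 0

lemma fd_proj (X : Idx15 p s n d) (C : ℂ) (w : Idx15 p s n d → ℂ) (σ : Idx15 p s n d) :
    fderiv ℂ (fun w' : Idx15 p s n d → ℂ => w' X + C) w (Pi.single σ 1)
      = Pi.single (M := fun _ : Idx15 p s n d => ℂ) σ 1 X := by
  have h : HasFDerivAt (fun w' : Idx15 p s n d → ℂ => w' X + C)
      (ContinuousLinearMap.proj (R := ℂ) (φ := fun _ : Idx15 p s n d => ℂ) X) w :=
    ((ContinuousLinearMap.proj (R := ℂ) (φ := fun _ : Idx15 p s n d => ℂ) X).hasFDerivAt).add_const C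
  rw [h.fderiv]
  rfl

lemma fd_f (hf : ∀ t, Differentiable ℂ (f t)) (t : Fin p) (w : Idx15 p s n d → ℂ)
    (σ : Idx15 p s n d) (hσ : ∀ z, σ ≠ Sum.inr (Sum.inr z)) :
    fderiv ℂ (fun w' : Idx15 p s n d → ℂ => f t (fun z => w' (Sum.inr (Sum.inr z)))) w
      (Pi.single σ 1) = 0 := by
  set π : (Idx15 p s n d → ℂ) →L[ℂ] (Fin d → ℂ) :=
    ContinuousLinearMap.pi (fun z => ContinuousLinearMap.proj (R := ℂ)
      (φ := fun _ : Idx15 p s n d => ℂ) (Sum.inr (Sum.inr z))) with hπ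
  have h : HasFDerivAt (fun w' : Idx15 p s n d → ℂ => f t (fun z => w' (Sum.inr (Sum.inr z))))
      ((fderiv ℂ (f t) (π w)).comp π) w :=
    (((hf t) (π w)).hasFDerivAt).comp w π.hasFDerivAt
  rw [h.fderiv]
  have hz : π (Pi.single σ 1) = 0 := by
    funext z
    exact Pi.single_eq_of_ne (Ne.symm (hσ z)) 1
  simp [hz]

lemma fd_pq (hf : ∀ t, Differentiable ℂ (f t)) (a b : PQIdx p s n)
    (w : Idx15 p s n d → ℂ) (σ : Idx15 p s n d) (hσ : ∀ z, σ ≠ Sum.inr (Sum.inr z)) :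
    fderiv ℂ (fun w' => pqEntry p s n d c f w' a b) w (Pi.single σ 1)
      = dEntry p s n d (Sum.inl a) (Sum.inr (Sum.inl b)) σ := by
  obtain ⟨t, i, j⟩ := a
  obtain ⟨t', i', k⟩ := b
  by_cases h1 : (⟨t, i⟩ : Σ t : Fin p, Fin (s t)) = ⟨t', i'⟩
  · by_cases h2 : (j : ℕ) = (k : ℕ)
    · have hfun : (fun w' => pqEntry p s n d c f w' ⟨t, i, j⟩ ⟨t', i', k⟩)
          = fun w' : Idx15 p s n d → ℂ => f t (fun z => w' (Sum.inr (Sum.inr z))) := by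
        funext w'
        simp only [pqEntry, if_pos h1, if_pos h2]
      rw [hfun, fd_f p s n d f hf t w σ hσ]
      rcases σ with e | e | z
      · show (0:ℂ) = dP p s n _ _ e
        rw [dP, if_neg (fun hc => absurd hc.2.1 (show ¬((k:ℕ) < (j:ℕ)) by omega))]
      · rfl
      · rfl
    · by_cases h3 : (k : ℕ) < (j : ℕ)
      · have hfun : (fun w' => pqEntry p s n d c f w' ⟨t, i, j⟩ ⟨t', i', k⟩)
            = fun w' : Idx15 p s n d → ℂ =>
              w' (Sum.inl ⟨t, i, subFin p s n ⟨t, i, j⟩ k⟩)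
              + c t i (subFin p s n ⟨t, i, j⟩ k) := by
          funext w'
          simp only [pqEntry, if_pos h1, if_neg h2, if_pos h3]
          rfl
        rw [hfun, fd_proj]
        rcases σ with e | e | z
        · show _ = dP p s n _ _ e
          by_cases he : e = ⟨t, i, subFin p s n ⟨t, i, j⟩ k⟩
          · subst he
            rw [dP, if_pos ⟨h1, h3, rfl⟩, Pi.single_eq_same]
          · rw [dP, if_neg (fun hc => he hc.2.2), Pi.single_eq_of_ne]
            exact fun hc => he (Sum.inl_injective hc.symm)
        · show _ = (0:ℂ)
          rw [Pi.single_eq_of_ne (by simp)]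
        · exact absurd rfl (hσ z)
      · have hfun : (fun w' => pqEntry p s n d c f w' ⟨t, i, j⟩ ⟨t', i', k⟩)
            = fun _ : Idx15 p s n d → ℂ => (0 : ℂ) := by
          funext w'
          simp only [pqEntry, if_pos h1, if_neg h2, if_neg h3]
        rw [hfun, fderiv_fun_const]
        rcases σ with e | e | z
        · show (0:ℂ) = dP p s n _ _ e
          rw [dP, if_neg (fun hc => h3 hc.2.1)]
        · rfl
        · rfl
  · have hfun : (fun w' => pqEntry p s n d c f w' ⟨t, i, j⟩ ⟨t', i', k⟩)
        = fun _ : Idx15 p s n d → ℂ => (0 : ℂ) := by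
      funext w'
      simp only [pqEntry, if_neg h1]
    rw [hfun, fderiv_fun_const]
    rcases σ with e | e | z
    · show (0:ℂ) = dP p s n _ _ e
      rw [dP, if_neg (fun hc => h1 hc.1)]
    · rfl
    · rfl

lemma fd_Pi15 (hf : ∀ t, Differentiable ℂ (f t)) (v r : Idx15 p s n d)
    (w : Idx15 p s n d → ℂ) (σ : Idx15 p s n d) (hσ : ∀ z, σ ≠ Sum.inr (Sum.inr z)) :
    fderiv ℂ (fun w' => Pi15 p s n d c f w' v r) w (Pi.single σ 1)
      = dEntry p s n d v r σ := by
  rcases v with a | a | z <;> rcases r with b | b | z'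
  · rw [show (fun w' => Pi15 p s n d c f w' (Sum.inl a) (Sum.inl b))
        = fun _ : Idx15 p s n d → ℂ => (0:ℂ) from rfl, fderiv_fun_const]
    rcases σ with e | e | z <;> rfl
  · exact fd_pq p s n d c f hf a b w σ hσ
  · rw [show (fun w' => Pi15 p s n d c f w' (Sum.inl a) (Sum.inr (Sum.inr z')))
        = fun _ : Idx15 p s n d → ℂ => (0:ℂ) from rfl, fderiv_fun_const]
    rcases σ with e | e | z <;> rfl
  · rw [show (fun w' => Pi15 p s n d c f w' (Sum.inr (Sum.inl a)) (Sum.inl b))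
        = fun w' : Idx15 p s n d → ℂ => -(pqEntry p s n d c f w' b a) from rfl,
      fderiv_fun_neg, ContinuousLinearMap.neg_apply,
      fd_pq p s n d c f hf b a w σ hσ]
    rcases σ with e | e | z <;> first | rfl | simp [dEntry]
  · rw [show (fun w' => Pi15 p s n d c f w' (Sum.inr (Sum.inl a)) (Sum.inr (Sum.inl b)))
        = fun _ : Idx15 p s n d → ℂ => (0:ℂ) from rfl, fderiv_fun_const]
    rcases σ with e | e | z <;> rfl
  · rw [show (fun w' => Pi15 p s n d c f w' (Sum.inr (Sum.inl a)) (Sum.inr (Sum.inr z')))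
        = fun _ : Idx15 p s n d → ℂ => (0:ℂ) from rfl, fderiv_fun_const]
    rcases σ with e | e | z <;> rfl
  · rw [show (fun w' => Pi15 p s n d c f w' (Sum.inr (Sum.inr z)) (Sum.inl b))
        = fun _ : Idx15 p s n d → ℂ => (0:ℂ) from rfl, fderiv_fun_const]
    rcases σ with e | e | z <;> rfl
  · rw [show (fun w' => Pi15 p s n d c f w' (Sum.inr (Sum.inr z)) (Sum.inr (Sum.inl b)))
        = fun _ : Idx15 p s n d → ℂ => (0:ℂ) from rfl, fderiv_fun_const]
    rcases σ with e | e | z <;> rfl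
  · rw [show (fun w' => Pi15 p s n d c f w' (Sum.inr (Sum.inr z)) (Sum.inr (Sum.inr z')))
        = fun _ : Idx15 p s n d → ℂ => (0:ℂ) from rfl, fderiv_fun_const]
    rcases σ with e | e | z <;> rfl

lemma dEntry_inr (v r : Idx15 p s n d) (x : PQIdx p s n ⊕ Fin d) :
    dEntry p s n d v r (Sum.inr x) = 0 := by
  rcases v with a | a | z <;> rcases r with b | b | z' <;> rcases x with e | e <;> rfl

lemma Pi15_zz (w : Idx15 p s n d → ℂ) (z : Fin d) (x : Idx15 p s n d) :
    Pi15 p s n d c f w (Sum.inr (Sum.inr z)) x = 0 := by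
  rcases x with a | a | z' <;> rfl

lemma key_s15 (w : Idx15 p s n d → ℂ) (a b b' : PQIdx p s n) :
    ∑ e : PQIdx p s n, pqEntry p s n d c f w e b * dP p s n a b' e
      = if (⟨a.1, a.2.1⟩ : Σ t : Fin p, Fin (s t)) = ⟨b'.1, b'.2.1⟩
            ∧ (b'.2.2 : ℕ) < (a.2.2 : ℕ)
        then pqEntry p s n d c f w ⟨a.1, a.2.1, subFin p s n a b'.2.2⟩ b else 0 := by
  by_cases hc : (⟨a.1, a.2.1⟩ : Σ t : Fin p, Fin (s t)) = ⟨b'.1, b'.2.1⟩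
      ∧ (b'.2.2 : ℕ) < (a.2.2 : ℕ)
  · rw [if_pos hc]
    have hd : ∀ e, dP p s n a b' e
        = if e = ⟨a.1, a.2.1, subFin p s n a b'.2.2⟩ then 1 else 0 := by
      intro e
      rw [dP]
      by_cases he : e = (⟨a.1, a.2.1, subFin p s n a b'.2.2⟩ : PQIdx p s n)
      · rw [if_pos ⟨hc.1, hc.2, he⟩, if_pos he]
      · rw [if_neg (fun h => he h.2.2), if_neg he]
    simp only [hd, mul_ite, mul_one, mul_zero]
    rw [Finset.sum_ite_eq' Finset.univ]
    simp
  · rw [if_neg hc]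
    have hd : ∀ e, dP p s n a b' e = 0 := fun e => by
      rw [dP, if_neg (fun h => hc ⟨h.1, h.2.1⟩)]
    simp [hd]

lemma key_symm (w : Idx15 p s n d → ℂ) (a b b' : PQIdx p s n) :
    (if (⟨a.1, a.2.1⟩ : Σ t : Fin p, Fin (s t)) = ⟨b'.1, b'.2.1⟩
          ∧ (b'.2.2 : ℕ) < (a.2.2 : ℕ)
      then pqEntry p s n d c f w ⟨a.1, a.2.1, subFin p s n a b'.2.2⟩ b else 0)
    = (if (⟨a.1, a.2.1⟩ : Σ t : Fin p, Fin (s t)) = ⟨b.1, b.2.1⟩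
          ∧ (b.2.2 : ℕ) < (a.2.2 : ℕ)
      then pqEntry p s n d c f w ⟨a.1, a.2.1, subFin p s n a b.2.2⟩ b' else 0) := by
  obtain ⟨t, i, j⟩ := a
  obtain ⟨t1, i1, k1⟩ := b
  obtain ⟨t2, i2, k2⟩ := b'
  dsimp only
  by_cases hA : (⟨t, i⟩ : Σ t : Fin p, Fin (s t)) = ⟨t1, i1⟩
  · by_cases hB : (⟨t, i⟩ : Σ t : Fin p, Fin (s t)) = ⟨t2, i2⟩
    · obtain ⟨rfl, h⟩ := Sigma.mk.inj_iff.mp hA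
      rw [heq_iff_eq] at h; subst h
      obtain ⟨rfl, h⟩ := Sigma.mk.inj_iff.mp hB
      rw [heq_iff_eq] at h; subst h
      by_cases h1 : (k1 : ℕ) < (j : ℕ) <;> by_cases h2 : (k2 : ℕ) < (j : ℕ)
      · rw [if_pos ⟨rfl, h2⟩, if_pos ⟨rfl, h1⟩]
        show pqEntry p s n d c f w ⟨t, i, subFin p s n ⟨t,i,j⟩ k2⟩ ⟨t, i, k1⟩
            = pqEntry p s n d c f w ⟨t, i, subFin p s n ⟨t,i,j⟩ k1⟩ ⟨t, i, k2⟩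
        dsimp only [pqEntry, subFin, Fin.val_mk]
        simp only [eq_self_iff_true, if_true]
        rcases Nat.lt_trichotomy ((j:ℕ)) ((k1:ℕ) + (k2:ℕ) + 1) with h3 | h3 | h3
        · rw [if_neg (by omega), if_neg (by omega), if_neg (by omega),
            if_neg (by omega)]
        · rw [if_pos (by omega), if_pos (by omega)]
        · rw [if_neg (by omega), if_pos (by omega), if_neg (by omega),
            if_pos (by omega)]
          have hv : ((j:ℕ) - (k2:ℕ) - 1) - (k1:ℕ) - 1
              = ((j:ℕ) - (k1:ℕ) - 1) - (k2:ℕ) - 1 := by omega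
          simp only [hv]
      · rw [if_neg (fun hc => h2 hc.2), if_pos ⟨rfl, h1⟩]
        show (0:ℂ) = pqEntry p s n d c f w ⟨t, i, subFin p s n ⟨t,i,j⟩ k1⟩ ⟨t, i, k2⟩
        dsimp only [pqEntry, subFin, Fin.val_mk]
        simp only [eq_self_iff_true, if_true]
        rw [if_neg (by omega), if_neg (by omega)]
      · rw [if_pos ⟨rfl, h2⟩, if_neg (fun hc => h1 hc.2)]
        show pqEntry p s n d c f w ⟨t, i, subFin p s n ⟨t,i,j⟩ k2⟩ ⟨t, i, k1⟩ = (0:ℂ)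
        dsimp only [pqEntry, subFin, Fin.val_mk]
        simp only [eq_self_iff_true, if_true]
        rw [if_neg (by omega), if_neg (by omega)]
      · rw [if_neg (fun hc => h2 hc.2), if_neg (fun hc => h1 hc.2)]
    · rw [if_neg (fun h => hB h.1)]
      by_cases h1 : (k1 : ℕ) < (j : ℕ)
      · rw [if_pos ⟨hA, h1⟩]
        show (0:ℂ) = pqEntry p s n d c f w ⟨t, i, subFin p s n ⟨t,i,j⟩ k1⟩ ⟨t2, i2, k2⟩
        simp only [pqEntry, subFin]
        rw [if_neg hB]
      · rw [if_neg (fun hc => h1 hc.2)]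
  · by_cases hc : (⟨t, i⟩ : Σ t : Fin p, Fin (s t)) = ⟨t2, i2⟩ ∧ (k2:ℕ) < (j:ℕ)
    · rw [if_pos hc, if_neg (fun h => hA h.1)]
      show pqEntry p s n d c f w ⟨t, i, subFin p s n ⟨t,i,j⟩ k2⟩ ⟨t1, i1, k1⟩ = (0:ℂ)
      simp only [pqEntry, subFin]
      rw [if_neg hA]
    · rw [if_neg hc, if_neg (fun h => hA h.1)]


lemma Pi15_inl_P (w : Idx15 p s n d → ℂ) (e a : PQIdx p s n) :
    Pi15 p s n d c f w (Sum.inl e) (Sum.inl a) = 0 := rfl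
lemma Pi15_inl_Q (w : Idx15 p s n d → ℂ) (e b : PQIdx p s n) :
    Pi15 p s n d c f w (Sum.inl e) (Sum.inr (Sum.inl b)) = pqEntry p s n d c f w e b := rfl
lemma Pi15_inl_Z (w : Idx15 p s n d → ℂ) (e : PQIdx p s n) (z : Fin d) :
    Pi15 p s n d c f w (Sum.inl e) (Sum.inr (Sum.inr z)) = 0 := rfl

lemma dE_PQ (a b e : PQIdx p s n) :
    dEntry p s n d (Sum.inl a) (Sum.inr (Sum.inl b)) (Sum.inl e) = dP p s n a b e := rfl
lemma dE_QP (a b e : PQIdx p s n) :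
    dEntry p s n d (Sum.inr (Sum.inl b)) (Sum.inl a) (Sum.inl e) = -dP p s n a b e := rfl
lemma dE_PP (a b e : PQIdx p s n) :
    dEntry p s n d (Sum.inl a) (Sum.inl b) (Sum.inl e) = 0 := rfl
lemma dE_QQ (a b e : PQIdx p s n) :
    dEntry p s n d (Sum.inr (Sum.inl a)) (Sum.inr (Sum.inl b)) (Sum.inl e) = 0 := rfl
lemma dE_PZ (a e : PQIdx p s n) (z : Fin d) :
    dEntry p s n d (Sum.inl a) (Sum.inr (Sum.inr z)) (Sum.inl e) = 0 := rfl
lemma dE_ZP (a e : PQIdx p s n) (z : Fin d) :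
    dEntry p s n d (Sum.inr (Sum.inr z)) (Sum.inl a) (Sum.inl e) = 0 := rfl
lemma dE_QZ (a e : PQIdx p s n) (z : Fin d) :
    dEntry p s n d (Sum.inr (Sum.inl a)) (Sum.inr (Sum.inr z)) (Sum.inl e) = 0 := rfl
lemma dE_ZQ (a e : PQIdx p s n) (z : Fin d) :
    dEntry p s n d (Sum.inr (Sum.inr z)) (Sum.inr (Sum.inl a)) (Sum.inl e) = 0 := rfl
lemma dE_ZZ (e : PQIdx p s n) (z z' : Fin d) :
    dEntry p s n d (Sum.inr (Sum.inr z)) (Sum.inr (Sum.inr z')) (Sum.inl e) = 0 := rfl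

end aux

/-- Proposition 5.3: the bracket `{p^i_{t,j}, q^i_{t,k}} = p^i_{t,j−k} + c^i_{t,j−k}`
for `j > k`, `= f_t(z)` for `j = k`, with all other brackets of coordinates zero,
satisfies the Jacobi identity of a Poisson structure. -/
theorem stmt_15 (p : ℕ) (hp : 1 ≤ p) (s : Fin p → ℕ) (hs : ∀ t, 1 ≤ s t)
    (n : (t : Fin p) → Fin (s t) → ℕ) (hn : ∀ t i, 1 ≤ n t i)
    (d : ℕ) (c : (t : Fin p) → (i : Fin (s t)) → Fin (n t i) → ℂ)
    (f : Fin p → (Fin d → ℂ) → ℂ) (hf : ∀ t, Differentiable ℂ (f t)) :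
    ∀ (w : Idx15 p s n d → ℂ) (u v r : Idx15 p s n d),
      ∑ σ : Idx15 p s n d,
        (Pi15 p s n d c f w σ u *
            fderiv ℂ (fun w' => Pi15 p s n d c f w' v r) w (Pi.single σ 1)
          + Pi15 p s n d c f w σ v *
            fderiv ℂ (fun w' => Pi15 p s n d c f w' r u) w (Pi.single σ 1)
          + Pi15 p s n d c f w σ r *
            fderiv ℂ (fun w' => Pi15 p s n d c f w' u v) w (Pi.single σ 1)) = 0 := by
  intro w u v r
  have hsum : ∀ σ : Idx15 p s n d,
      (Pi15 p s n d c f w σ u *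
          fderiv ℂ (fun w' => Pi15 p s n d c f w' v r) w (Pi.single σ 1)
        + Pi15 p s n d c f w σ v *
          fderiv ℂ (fun w' => Pi15 p s n d c f w' r u) w (Pi.single σ 1)
        + Pi15 p s n d c f w σ r *
          fderiv ℂ (fun w' => Pi15 p s n d c f w' u v) w (Pi.single σ 1))
      = (Pi15 p s n d c f w σ u * dEntry p s n d v r σ
        + Pi15 p s n d c f w σ v * dEntry p s n d r u σ
        + Pi15 p s n d c f w σ r * dEntry p s n d u v σ) := by
    intro σ
    rcases σ with e | e | z
    · rw [fd_Pi15 p s n d c f hf v r w _ (by simp),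
        fd_Pi15 p s n d c f hf r u w _ (by simp),
        fd_Pi15 p s n d c f hf u v w _ (by simp)]
    · rw [fd_Pi15 p s n d c f hf v r w _ (by simp),
        fd_Pi15 p s n d c f hf r u w _ (by simp),
        fd_Pi15 p s n d c f hf u v w _ (by simp)]
    · rw [Pi15_zz p s n d c f w z u, Pi15_zz p s n d c f w z v,
        Pi15_zz p s n d c f w z r]
      simp
  rw [Finset.sum_congr rfl (fun σ _ => hsum σ), Fintype.sum_sum_type,
    Fintype.sum_sum_type]
  have hQ : ∀ e : PQIdx p s n,
      (Pi15 p s n d c f w (Sum.inr (Sum.inl e)) u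
          * dEntry p s n d v r (Sum.inr (Sum.inl e))
        + Pi15 p s n d c f w (Sum.inr (Sum.inl e)) v
          * dEntry p s n d r u (Sum.inr (Sum.inl e))
        + Pi15 p s n d c f w (Sum.inr (Sum.inl e)) r
          * dEntry p s n d u v (Sum.inr (Sum.inl e))) = 0 := by
    intro e
    rw [dEntry_inr, dEntry_inr, dEntry_inr]
    simp
  have hZ : ∀ z : Fin d,
      (Pi15 p s n d c f w (Sum.inr (Sum.inr z)) u
          * dEntry p s n d v r (Sum.inr (Sum.inr z))
        + Pi15 p s n d c f w (Sum.inr (Sum.inr z)) v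
          * dEntry p s n d r u (Sum.inr (Sum.inr z))
        + Pi15 p s n d c f w (Sum.inr (Sum.inr z)) r
          * dEntry p s n d u v (Sum.inr (Sum.inr z))) = 0 := by
    intro z
    rw [Pi15_zz p s n d c f w z u, Pi15_zz p s n d c f w z v,
      Pi15_zz p s n d c f w z r]
    simp
  rw [Finset.sum_congr rfl (fun e _ => hQ e), Finset.sum_congr rfl (fun z _ => hZ z)]
  simp only [Finset.sum_const_zero, add_zero]
  rcases u with a1 | b1 | z1 <;> rcases v with a2 | b2 | z2 <;> rcases r with a3 | b3 | z3 <;>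
    simp only [Pi15_inl_P, Pi15_inl_Q, Pi15_inl_Z, dE_PQ, dE_QP, dE_PP, dE_QQ,
      dE_PZ, dE_ZP, dE_QZ, dE_ZQ, dE_ZZ, zero_mul, mul_zero, add_zero, zero_add,
      mul_neg, neg_zero, Finset.sum_const_zero]
  -- remaining three nontrivial cases
  · -- u = inl a1, v,r ∈ Q
    rw [Finset.sum_add_distrib, Finset.sum_neg_distrib,
      key_s15 p s n d c f w a1 b2 b3, key_s15 p s n d c f w a1 b3 b2,
      key_symm p s n d c f w a1 b2 b3]
    exact neg_add_cancel _
  · -- v = inl a2, u,r ∈ Q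
    rw [Finset.sum_add_distrib, Finset.sum_neg_distrib,
      key_s15 p s n d c f w a2 b1 b3, key_s15 p s n d c f w a2 b3 b1,
      key_symm p s n d c f w a2 b1 b3]
    exact add_neg_cancel _
  · -- r = inl a3, u,v ∈ Q
    rw [Finset.sum_add_distrib, Finset.sum_neg_distrib,
      key_s15 p s n d c f w a3 b1 b2, key_s15 p s n d c f w a3 b2 b1,
      key_symm p s n d c f w a3 b1 b2]
    exact neg_add_cancel _
end

section
/- Let n ≥ 1 and let f, gter be nonzero homogeneous polynomials in n complex variables of degrees a ≥ 1 and b ≥ 1 respectively (write g for the second one). Assume that their differentials are everywhere linearly dependent, i.e. ∂ᵢf · ∂ⱼg = ∂ⱼf · ∂ᵢg as polynomials for all i, j ∈ Fin n. Then there exist a homogeneous polynomial p, nonzero constants c₁, c₂ ∈ ℂ, and positive integers k₁, k₂ such that f = c₁ • p^{k₁} and g = c₂ • p^{k₂}. (The content of Proposition 10.8 of the paper: for a Lie algebra of index 1 any two homogeneous invariants are, up to scalars, powers of a common polynomial, whence the algebra of invariants ℂ[𝔤]^𝔤 is a polynomial ring ℂ[p].) -/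
open MvPolynomial

namespace Stmt17

variable {n : ℕ}

/-- coefficient formula for pderiv over ℂ -/
lemma coeff_pderiv (i : Fin n) (m : Fin n →₀ ℕ) (F : MvPolynomial (Fin n) ℂ) :
    coeff m (pderiv i F) = ((m i : ℂ) + 1) * coeff (m + Finsupp.single i 1) F := by
  induction F using MvPolynomial.induction_on' with
  | monomial s c =>
    rw [pderiv_monomial, coeff_monomial, coeff_monomial]
    by_cases h : s = m + Finsupp.single i 1
    · subst h
      have h1 : m + Finsupp.single i 1 - Finsupp.single i 1 = m := by
        simp [add_tsub_cancel_right]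
      have h4 : ((m + Finsupp.single i 1 : Fin n →₀ ℕ)) i = m i + 1 := by
        rw [Finsupp.add_apply, Finsupp.single_eq_same]
      rw [if_pos h1, h4, if_pos rfl]
      push_cast
      ring
    · rw [if_neg h]
      by_cases h2 : s - Finsupp.single i 1 = m
      · rw [if_pos h2]
        by_cases h3 : s i = 0
        · simp [h3]
        · exfalso
          apply h
          rw [← h2]
          rw [tsub_add_cancel_of_le]
          rwa [Finsupp.single_le_iff, Nat.one_le_iff_ne_zero]
      · rw [if_neg h2]; ring
  | add p q hp hq =>
    rw [map_add, coeff_add, coeff_add, hp, hq]; ring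





variable {n : ℕ}

lemma coeff_X_mul_pderiv (i : Fin n) (d : Fin n →₀ ℕ) (F : MvPolynomial (Fin n) ℂ) :
    coeff d (X i * pderiv i F) = (d i : ℂ) * coeff d F := by
  classical
  rw [coeff_X_mul' d i (pderiv i F)]
  by_cases h : i ∈ d.support
  · rw [if_pos h, coeff_pderiv]
    have hd1 : 1 ≤ d i := Nat.one_le_iff_ne_zero.mpr (Finsupp.mem_support_iff.mp h)
    have h2 : d - Finsupp.single i 1 + Finsupp.single i 1 = d := by
      rw [tsub_add_cancel_of_le]
      rwa [Finsupp.single_le_iff]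
    have h3 : (d - Finsupp.single i 1 : Fin n →₀ ℕ) i = d i - 1 := by
      rw [Finsupp.tsub_apply, Finsupp.single_eq_same]
    rw [h2, h3]
    congr 1
    have : ((d i - 1 : ℕ) : ℂ) = (d i : ℂ) - 1 := by
      push_cast [hd1]; ring
    rw [this]; ring
  · rw [if_neg h]
    have : d i = 0 := Finsupp.notMem_support_iff.mp h
    rw [this]; simp

lemma euler {f : MvPolynomial (Fin n) ℂ} {a : ℕ} (hfh : f.IsHomogeneous a) :
    ∑ i : Fin n, X i * pderiv i f = a • f := by
  ext d
  rw [coeff_sum]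
  simp only [coeff_X_mul_pderiv]
  rw [← Finset.sum_mul, coeff_smul]
  by_cases hc : coeff d f = 0
  · rw [hc, mul_zero, smul_zero]
  · have hdeg : d.degree = a := by
      by_contra hne
      exact hc (hfh.coeff_eq_zero hne)
    have : ∑ i : Fin n, (d i : ℂ) = (a : ℂ) := by
      rw [← Nat.cast_sum]
      norm_cast
      rw [← hdeg, Finsupp.degree]
      exact (Finset.sum_subset (Finset.subset_univ _) (by
        intro x _ hx
        exact Finsupp.notMem_support_iff.mp hx)).symm
    rw [this, nsmul_eq_mul]

/-- all partials zero implies constant -/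
lemma eq_C_of_pderiv_eq_zero {F : MvPolynomial (Fin n) ℂ}
    (h : ∀ i : Fin n, pderiv i F = 0) : F = C (coeff 0 F) := by
  ext d
  by_cases hd : d = 0
  · subst hd; simp
  · rw [coeff_C, if_neg (Ne.symm hd)]
    by_contra hc
    obtain ⟨i, hi⟩ : ∃ i, d i ≠ 0 := by
      by_contra hall
      push_neg at hall
      exact hd (Finsupp.ext hall)
    have h2 : d - Finsupp.single i 1 + Finsupp.single i 1 = d := by
      rw [tsub_add_cancel_of_le]
      rwa [Finsupp.single_le_iff, Nat.one_le_iff_ne_zero]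
    have := coeff_pderiv i (d - Finsupp.single i 1) F
    rw [h i, coeff_zero, h2] at this
    have hne : ((d - Finsupp.single i 1 : Fin n →₀ ℕ) i : ℂ) + 1 ≠ 0 := by
      have := Nat.cast_add_one_ne_zero (R := ℂ) ((d - Finsupp.single i 1 : Fin n →₀ ℕ) i)
      push_cast at this ⊢
      exact this
    exact hc (by
      have := (mul_eq_zero.mp this.symm).resolve_left hne
      exact this)

/-- degree drop of pderiv -/
lemma totalDegree_lt_of_pderiv_ne_zero {F : MvPolynomial (Fin n) ℂ} (i : Fin n)
    (h : pderiv i F ≠ 0) : (pderiv i F).totalDegree + 1 ≤ F.totalDegree := by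
  obtain ⟨m, hm⟩ : ((pderiv i F).support).Nonempty := support_nonempty.mpr h
  -- show sup+1 ≤ totalDegree F
  have key : ∀ m ∈ (pderiv i F).support, m.degree + 1 ≤ F.totalDegree := by
    intro m hm
    have hc : coeff m (pderiv i F) ≠ 0 := Finsupp.mem_support_iff.mp hm
    rw [coeff_pderiv] at hc
    have hc2 : coeff (m + Finsupp.single i 1) F ≠ 0 := by
      intro hz; exact hc (by rw [hz, mul_zero])
    have hmem : m + Finsupp.single i 1 ∈ F.support := Finsupp.mem_support_iff.mpr hc2
    have := le_totalDegree hmem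
    calc m.degree + 1 = (m + Finsupp.single i 1).degree := by
          simp [Finsupp.degree_eq_weight_one, map_add, Finsupp.weight_apply,
            Finsupp.sum_single_index]
      _ ≤ F.totalDegree := by
          rw [MvPolynomial.totalDegree] at *
          exact le_trans (by rw [Finsupp.degree]; exact le_refl _) this
  rw [MvPolynomial.totalDegree]
  have : (pderiv i F).support.Nonempty := ⟨m, hm⟩
  obtain ⟨m0, hm0, hsup⟩ := Finset.exists_mem_eq_sup _ this (fun m => m.sum fun _ e => e)
  rw [hsup]
  have : (m0.sum fun _ e => e) = m0.degree := by rw [Finsupp.degree]; rfl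
  rw [this]
  exact key m0 hm0





variable {n : ℕ} {F G : MvPolynomial (Fin n) ℂ}

lemma isHomogeneous_of_support {M : ℕ}
    (h : ∀ d ∈ F.support, Finsupp.degree d = M) : F.IsHomogeneous M := by
  intro d hd
  have := h d (MvPolynomial.mem_support_iff.mpr hd)
  rw [Finsupp.degree_eq_weight_one] at this
  exact this

lemma degree_eq_sum (d : Fin n →₀ ℕ) : (d.sum fun _ e => e) = d.degree := rfl

lemma top_ne_zero (hF : F ≠ 0) :
    homogeneousComponent F.totalDegree F ≠ 0 := by
  obtain ⟨d, hd, hsup⟩ := Finset.exists_mem_eq_sup _ (support_nonempty.mpr hF)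
    (fun m : Fin n →₀ ℕ => m.sum fun _ e => e)
  intro hzero
  have := coeff_homogeneousComponent F.totalDegree F d
  rw [hzero, coeff_zero] at this
  rw [if_pos (by rw [MvPolynomial.totalDegree, hsup, degree_eq_sum])] at this
  exact MvPolynomial.mem_support_iff.mp hd this.symm

/-- data for the minimal degree -/
lemma minDeg_spec (hF : F ≠ 0) :
    ∃ m : ℕ, m ≤ F.totalDegree ∧ homogeneousComponent m F ≠ 0 ∧
      (∀ k < m, homogeneousComponent k F = 0) ∧
      ∀ d ∈ F.support, m ≤ Finsupp.degree d := by
  have hne : (F.support.image Finsupp.degree).Nonempty :=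
    (support_nonempty.mpr hF).image _
  set m := (F.support.image Finsupp.degree).min' hne with hm
  obtain ⟨d, hd, hdm⟩ := Finset.mem_image.mp ((F.support.image Finsupp.degree).min'_mem hne)
  refine ⟨m, ?_, ?_, ?_, ?_⟩
  · rw [hm, ← hdm]
    calc Finsupp.degree d = d.sum fun _ e => e := (degree_eq_sum d).symm
      _ ≤ F.totalDegree := le_totalDegree hd
  · intro hzero
    have := coeff_homogeneousComponent m F d
    rw [hzero, coeff_zero, if_pos hdm] at this
    exact MvPolynomial.mem_support_iff.mp hd this.symm
  · intro k hk
    apply homogeneousComponent_eq_zero'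
    intro d' hd' hdk
    have : m ≤ Finsupp.degree d' :=
      Finset.min'_le _ _ (Finset.mem_image_of_mem _ hd')
    omega
  · intro d' hd'
    exact Finset.min'_le _ _ (Finset.mem_image_of_mem _ hd')

lemma homogeneousComponent_mul (kF kG : ℕ) (hkF : kF ≤ F.totalDegree) (hkG : kG ≤ G.totalDegree)
    (hz : ∀ k ∈ Finset.range (F.totalDegree + 1), ∀ l ∈ Finset.range (G.totalDegree + 1),
      k + l = kF + kG → ¬(k = kF ∧ l = kG) →
      homogeneousComponent k F * homogeneousComponent l G = 0) :
    homogeneousComponent (kF + kG) (F * G) =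
      homogeneousComponent kF F * homogeneousComponent kG G := by
  conv_lhs => rw [← sum_homogeneousComponent F, ← sum_homogeneousComponent G,
    Finset.sum_mul_sum, map_sum]
  rw [Finset.sum_congr rfl (g := fun k => ∑ l ∈ Finset.range (G.totalDegree + 1),
      if kF + kG = k + l then homogeneousComponent k F * homogeneousComponent l G else 0)
    (fun k _ => by
      rw [map_sum]
      refine Finset.sum_congr rfl (fun l _ => ?_)
      exact homogeneousComponent_of_mem
        ((mem_homogeneousSubmodule _ _).mpr
          ((homogeneousComponent_isHomogeneous k F).mul
            (homogeneousComponent_isHomogeneous l G))))]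
  rw [Finset.sum_eq_single kF]
  · rw [Finset.sum_eq_single kG]
    · rw [if_pos rfl]
    · intro l hl hlne
      by_cases hc : kF + kG = kF + l
      · rw [if_pos hc]
        exact hz kF (Finset.mem_range.mpr (by omega)) l hl (by omega) (by tauto)
      · rw [if_neg hc]
    · intro hmem
      exact absurd (Finset.mem_range.mpr (by omega)) hmem
  · intro k hk hkne
    apply Finset.sum_eq_zero
    intro l hl
    by_cases hc : kF + kG = k + l
    · rw [if_pos hc]
      exact hz k hk l hl hc.symm (by tauto)
    · rw [if_neg hc]
  · intro hmem
    exact absurd (Finset.mem_range.mpr (by omega)) hmem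

lemma totalDegree_mul_eq (hF : F ≠ 0) (hG : G ≠ 0) :
    (F * G).totalDegree = F.totalDegree + G.totalDegree := by
  refine le_antisymm (totalDegree_mul F G) ?_
  have hcomp := homogeneousComponent_mul (F := F) (G := G)
    F.totalDegree G.totalDegree le_rfl le_rfl (by
      intro k hk l hl hsum hne
      exfalso
      rw [Finset.mem_range] at hk hl
      exact hne ⟨by omega, by omega⟩)
  have hne : homogeneousComponent (F.totalDegree + G.totalDegree) (F * G) ≠ 0 := by
    rw [hcomp]
    exact mul_ne_zero (top_ne_zero hF) (top_ne_zero hG)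
  by_contra hlt
  push_neg at hlt
  exact hne (homogeneousComponent_eq_zero _ _ hlt)

lemma factor_isHomogeneous (hF : F ≠ 0) (hG : G ≠ 0) {N : ℕ}
    (hFG : (F * G).IsHomogeneous N) : F.IsHomogeneous F.totalDegree := by
  obtain ⟨mF, hmF_le, hmF_ne, hmF_zero, hmF_min⟩ := minDeg_spec hF
  obtain ⟨mG, hmG_le, hmG_ne, hmG_zero, _⟩ := minDeg_spec hG
  have hFGne : F * G ≠ 0 := mul_ne_zero hF hG
  -- top degrees sum to N
  have htop : F.totalDegree + G.totalDegree = N := by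
    have hcomp := homogeneousComponent_mul (F := F) (G := G)
      F.totalDegree G.totalDegree le_rfl le_rfl (by
        intro k hk l hl hsum hne
        exfalso
        rw [Finset.mem_range] at hk hl
        exact hne ⟨by omega, by omega⟩)
    have hne : homogeneousComponent (F.totalDegree + G.totalDegree) (F * G) ≠ 0 := by
      rw [hcomp]
      exact mul_ne_zero (top_ne_zero hF) (top_ne_zero hG)
    have := homogeneousComponent_of_mem ((mem_homogeneousSubmodule _ _).mpr hFG)
      (m := F.totalDegree + G.totalDegree)
    by_cases hc : F.totalDegree + G.totalDegree = N
    · exact hc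
    · rw [if_neg hc] at this
      exact absurd this hne
  -- bottom degrees sum to N
  have hbot : mF + mG = N := by
    have hcomp := homogeneousComponent_mul (F := F) (G := G)
      mF mG hmF_le hmG_le (by
        intro k hk l hl hsum hne
        rw [Finset.mem_range] at hk hl
        rcases (by omega : k < mF ∨ l < mG) with h | h
        · rw [hmF_zero k h, zero_mul]
        · rw [hmG_zero l h, mul_zero])
    have hne : homogeneousComponent (mF + mG) (F * G) ≠ 0 := by
      rw [hcomp]
      exact mul_ne_zero hmF_ne hmG_ne
    have := homogeneousComponent_of_mem ((mem_homogeneousSubmodule _ _).mpr hFG)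
      (m := mF + mG)
    by_cases hc : mF + mG = N
    · exact hc
    · rw [if_neg hc] at this
      exact absurd this hne
  have hmFeq : mF = F.totalDegree := by omega
  apply isHomogeneous_of_support
  intro d hd
  have h1 : Finsupp.degree d ≤ F.totalDegree := by
    rw [← degree_eq_sum]
    exact le_totalDegree hd
  have h2 : mF ≤ Finsupp.degree d := hmF_min d hd
  omega

lemma eq_C_of_totalDegree_eq_zero {q : MvPolynomial (Fin n) ℂ} (h : q.totalDegree = 0) :
    q = C (coeff 0 q) := by
  rw [MvPolynomial.totalDegree_eq_zero_iff] at h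
  ext d
  by_cases hd : d = 0
  · subst hd; simp
  · rw [coeff_C, if_neg (Ne.symm hd)]
    by_contra hc
    obtain ⟨i, hi⟩ : ∃ i, d i ≠ 0 := by
      by_contra hall
      push_neg at hall
      exact hd (Finsupp.ext hall)
    exact hi (h d (MvPolynomial.mem_support_iff.mpr hc) i)

lemma isUnit_iff_C {q : MvPolynomial (Fin n) ℂ} :
    IsUnit q ↔ ∃ c : ℂ, c ≠ 0 ∧ q = C c := by
  constructor
  · intro hq
    obtain ⟨v, h1⟩ := hq.exists_right_inv
    have hu : q ≠ 0 := by
      intro hz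
      rw [hz, zero_mul] at h1
      exact zero_ne_one h1
    have hv : v ≠ 0 := by
      intro hz
      rw [hz, mul_zero] at h1
      exact zero_ne_one h1
    have hdeg : q.totalDegree = 0 := by
      have := totalDegree_mul_eq hu hv
      rw [h1, MvPolynomial.totalDegree_one] at this
      omega
    refine ⟨coeff 0 q, ?_, eq_C_of_totalDegree_eq_zero hdeg⟩
    intro hz
    rw [eq_C_of_totalDegree_eq_zero hdeg, hz, map_zero] at hu
    exact hu rfl
  · rintro ⟨c, hc, rfl⟩
    exact hc.isUnit.map MvPolynomial.C




lemma exists_common_root {R : Type*} [CommRing R] [IsDomain R] [UniqueFactorizationMonoid R] :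
    ∀ N a b : ℕ, ∀ f g : R, a + b ≤ N → 1 ≤ a → 1 ≤ b → f ≠ 0 → g ≠ 0 →
    ¬IsUnit f → ¬IsUnit g → Associated (f ^ b) (g ^ a) →
    ∃ (p : R) (k₁ k₂ : ℕ), 1 ≤ k₁ ∧ 1 ≤ k₂ ∧ Associated f (p ^ k₁) ∧ Associated g (p ^ k₂) := by
  intro N
  induction N with
  | zero => intro a b f g hab ha hb; omega
  | succ N ih =>
    intro a b f g hab ha hb hf0 hg0 hfu hgu hassoc
    rcases lt_trichotomy a b with hlt | heq | hgt
    · -- a < b : f ∣ g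
      have h1 : f ^ b ∣ g ^ b := hassoc.dvd.trans (pow_dvd_pow g hlt.le)
      have h2 : f ∣ g := (IsIntegrallyClosed.pow_dvd_pow_iff (by omega : b ≠ 0)).mp h1
      obtain ⟨h, rfl⟩ := h2
      have hh0 : h ≠ 0 := by
        intro hz; rw [hz, mul_zero] at hg0; exact hg0 rfl
      have hcancel : Associated (f ^ (b - a)) (h ^ a) := by
        have e1 : f ^ b = f ^ a * f ^ (b - a) := by
          rw [← pow_add]; congr 1; omega
        have e2 : (f * h) ^ a = f ^ a * h ^ a := mul_pow f h a
        rw [e1, e2] at hassoc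
        exact hassoc.of_mul_left (Associated.refl _) (pow_ne_zero a hf0)
      have hhu : ¬IsUnit h := by
        intro hu
        have : IsUnit (f ^ (b - a)) := by
          obtain ⟨u, hu2⟩ := hcancel
          have he : f ^ (b - a) = h ^ a * ↑u⁻¹ := by
            rw [← hu2, mul_assoc, u.mul_inv, mul_one]
          rw [he]
          exact (hu.pow a).mul u⁻¹.isUnit
        exact hfu ((isUnit_pow_iff (by omega : b - a ≠ 0)).mp this)
      obtain ⟨p, k₁, k₂, hk₁, hk₂, hfp, hhp⟩ :=
        ih a (b - a) f h (by omega) ha (by omega) hf0 hh0 hfu hhu hcancel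
      exact ⟨p, k₁, k₁ + k₂, hk₁, by omega, hfp, by
        rw [pow_add]; exact hfp.mul_mul hhp⟩
    · -- a = b : f ~ g
      subst heq
      have h1 : f ∣ g := (IsIntegrallyClosed.pow_dvd_pow_iff (by omega : a ≠ 0)).mp hassoc.dvd
      have h2 : g ∣ f := (IsIntegrallyClosed.pow_dvd_pow_iff (by omega : a ≠ 0)).mp hassoc.symm.dvd
      exact ⟨f, 1, 1, le_rfl, le_rfl, by rw [pow_one], by
        rw [pow_one]; exact (associated_of_dvd_dvd h1 h2).symm⟩
    · -- b < a : g ∣ f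
      have h1 : g ^ a ∣ f ^ a := hassoc.symm.dvd.trans (pow_dvd_pow f hgt.le)
      have h2 : g ∣ f := (IsIntegrallyClosed.pow_dvd_pow_iff (by omega : a ≠ 0)).mp h1
      obtain ⟨h, rfl⟩ := h2
      have hh0 : h ≠ 0 := by
        intro hz; rw [hz, mul_zero] at hf0; exact hf0 rfl
      have hcancel : Associated (h ^ b) (g ^ (a - b)) := by
        have e1 : g ^ a = g ^ b * g ^ (a - b) := by
          rw [← pow_add]; congr 1; omega
        have e2 : (g * h) ^ b = g ^ b * h ^ b := mul_pow g h b
        rw [e1, e2] at hassoc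
        exact hassoc.of_mul_left (Associated.refl _) (pow_ne_zero b hg0)
      have hhu : ¬IsUnit h := by
        intro hu
        have : IsUnit (g ^ (a - b)) := by
          obtain ⟨u, hu2⟩ := hcancel
          rw [← hu2]
          exact (hu.pow b).mul u.isUnit
        exact hgu ((isUnit_pow_iff (by omega : a - b ≠ 0)).mp this)
      obtain ⟨p, k₁, k₂, hk₁, hk₂, hhp, hgp⟩ :=
        ih (a - b) b h g (by omega) (by omega) hb hh0 hg0 hhu hgu hcancel
      exact ⟨p, k₂ + k₁, k₂, by omega, hk₂, by
        rw [pow_add]; exact hgp.mul_mul hhp, hgp⟩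




section Steps

variable {f g : MvPolynomial (Fin n) ℂ} {a b : ℕ}

lemma step_A (hfh : f.IsHomogeneous a) (hgh : g.IsHomogeneous b)
    (hdep : ∀ i j : Fin n, pderiv i f * pderiv j g = pderiv j f * pderiv i g) (i : Fin n) :
    (b : MvPolynomial (Fin n) ℂ) * (g * pderiv i f) = (a : MvPolynomial (Fin n) ℂ) * (f * pderiv i g) := by
  have key : pderiv i f * (b • g) = (a • f) * pderiv i g := by
    rw [← euler hgh, ← euler hfh, Finset.mul_sum, Finset.sum_mul]
    refine Finset.sum_congr rfl (fun j _ => ?_)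
    calc pderiv i f * (X j * pderiv j g) = X j * (pderiv i f * pderiv j g) := by ring
      _ = X j * (pderiv j f * pderiv i g) := by rw [hdep i j]
      _ = X j * pderiv j f * pderiv i g := by ring
  rw [nsmul_eq_mul, nsmul_eq_mul] at key
  linear_combination key

lemma step_B (hfh : f.IsHomogeneous a) (hgh : g.IsHomogeneous b)
    (ha : 1 ≤ a) (hb : 1 ≤ b)
    (hdep : ∀ i j : Fin n, pderiv i f * pderiv j g = pderiv j f * pderiv i g) (i : Fin n) :
    pderiv i (f ^ b) * g ^ a = f ^ b * pderiv i (g ^ a) := by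
  obtain ⟨a', rfl⟩ : ∃ a', a = a' + 1 := ⟨a - 1, by omega⟩
  obtain ⟨b', rfl⟩ : ∃ b', b = b' + 1 := ⟨b - 1, by omega⟩
  have key := step_A hfh hgh hdep i
  rw [pderiv_pow, pderiv_pow]
  simp only [Nat.add_sub_cancel]
  linear_combination (f ^ b' * g ^ a') * key

lemma step_C {F G : MvPolynomial (Fin n) ℂ} (hF0 : F ≠ 0) (hG0 : G ≠ 0)
    (hrel : ∀ i : Fin n, pderiv i F * G = F * pderiv i G) :
    ∃ c : ℂ, c ≠ 0 ∧ F = c • G := by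
  obtain ⟨F₁, G₁, D, hrp, hDF, hDG⟩ :=
    UniqueFactorizationMonoid.exists_reduced_factors F hF0 G
  have hD0 : D ≠ 0 := fun hz => hF0 (by rw [← hDF, hz, zero_mul])
  have hF₁0 : F₁ ≠ 0 := fun hz => hF0 (by rw [← hDF, hz, mul_zero])
  have hG₁0 : G₁ ≠ 0 := fun hz => hG0 (by rw [← hDG, hz, mul_zero])
  have hred : ∀ i : Fin n, pderiv i F₁ * G₁ = F₁ * pderiv i G₁ := by
    intro i
    have h1 := hrel i
    rw [← hDF, ← hDG, pderiv_mul, pderiv_mul] at h1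
    have h2 : D ^ 2 * (pderiv i F₁ * G₁) = D ^ 2 * (F₁ * pderiv i G₁) := by
      linear_combination h1
    exact mul_left_cancel₀ (pow_ne_zero 2 hD0) h2
  have hFdvd : ∀ i : Fin n, F₁ ∣ pderiv i F₁ := fun i =>
    hrp.dvd_of_dvd_mul_right ⟨pderiv i G₁, hred i⟩
  have hGdvd : ∀ i : Fin n, G₁ ∣ pderiv i G₁ := fun i =>
    hrp.symm.dvd_of_dvd_mul_left ⟨pderiv i F₁, by rw [← hred i]; ring⟩
  have hFz : ∀ i : Fin n, pderiv i F₁ = 0 := by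
    intro i
    by_contra hne
    obtain ⟨t, ht⟩ := hFdvd i
    have ht0 : t ≠ 0 := fun hz => hne (by rw [ht, hz, mul_zero])
    have := totalDegree_lt_of_pderiv_ne_zero i hne
    rw [ht, totalDegree_mul_eq hF₁0 ht0] at this
    omega
  have hGz : ∀ i : Fin n, pderiv i G₁ = 0 := by
    intro i
    by_contra hne
    obtain ⟨t, ht⟩ := hGdvd i
    have ht0 : t ≠ 0 := fun hz => hne (by rw [ht, hz, mul_zero])
    have := totalDegree_lt_of_pderiv_ne_zero i hne
    rw [ht, totalDegree_mul_eq hG₁0 ht0] at this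
    omega
  have hF₁C := eq_C_of_pderiv_eq_zero hFz
  have hG₁C := eq_C_of_pderiv_eq_zero hGz
  set c₁ := coeff 0 F₁
  set c₂ := coeff 0 G₁
  have hc₁ : c₁ ≠ 0 := fun hz => hF₁0 (by rw [hF₁C, hz, map_zero])
  have hc₂ : c₂ ≠ 0 := fun hz => hG₁0 (by rw [hG₁C, hz, map_zero])
  refine ⟨c₁ * c₂⁻¹, mul_ne_zero hc₁ (inv_ne_zero hc₂), ?_⟩
  rw [smul_eq_C_mul, ← hDF, ← hDG, hF₁C, hG₁C]
  have hmul : C (c₁ * c₂⁻¹) * (D * C c₂) = D * C (c₁ * c₂⁻¹ * c₂) := by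
    simp only [map_mul]; ring
  rw [hmul, mul_assoc, inv_mul_cancel₀ hc₂, mul_one]

end Steps


end Stmt17

/-- Proposition 10.8: two nonzero homogeneous polynomials `f`, `g` of degrees
`a`, `b ≥ 1` with everywhere linearly dependent differentials are, up to nonzero
scalars, positive powers of a common homogeneous polynomial `p`. -/
theorem stmt_17 (n : ℕ) (hn : 1 ≤ n) (f g : MvPolynomial (Fin n) ℂ)
    (hf : f ≠ 0) (hg : g ≠ 0) (a b : ℕ) (ha : 1 ≤ a) (hb : 1 ≤ b)
    (hfh : f.IsHomogeneous a) (hgh : g.IsHomogeneous b)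
    (hdep : ∀ i j : Fin n,
      MvPolynomial.pderiv i f * MvPolynomial.pderiv j g =
      MvPolynomial.pderiv j f * MvPolynomial.pderiv i g) :
    ∃ (p : MvPolynomial (Fin n) ℂ) (e : ℕ) (c₁ c₂ : ℂ) (k₁ k₂ : ℕ),
      p.IsHomogeneous e ∧ c₁ ≠ 0 ∧ c₂ ≠ 0 ∧ 0 < k₁ ∧ 0 < k₂ ∧
      f = c₁ • p ^ k₁ ∧ g = c₂ • p ^ k₂ := by
  classical
  open Stmt17 in
  -- step B then C
  have hrel := Stmt17.step_B hfh hgh ha hb hdep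
  obtain ⟨c, hc0, hceq⟩ := Stmt17.step_C (pow_ne_zero b hf) (pow_ne_zero a hg) hrel
  -- f^b associated to g^a
  have hassoc : Associated (f ^ b) (g ^ a) := by
    have hCunit : IsUnit (C c : MvPolynomial (Fin n) ℂ) :=
      Stmt17.isUnit_iff_C.mpr ⟨c, hc0, rfl⟩
    refine Associated.symm ⟨hCunit.unit, ?_⟩
    rw [IsUnit.unit_spec, mul_comm, ← MvPolynomial.smul_eq_C_mul, ← hceq]
  -- f, g are not units
  have hfu : ¬IsUnit f := by
    intro hu
    obtain ⟨cf, hcf, hfeq⟩ := Stmt17.isUnit_iff_C.mp hu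
    have := hfh.totalDegree hf
    rw [hfeq, MvPolynomial.totalDegree_C] at this
    omega
  have hgu : ¬IsUnit g := by
    intro hu
    obtain ⟨cg, hcg, hgeq⟩ := Stmt17.isUnit_iff_C.mp hu
    have := hgh.totalDegree hg
    rw [hgeq, MvPolynomial.totalDegree_C] at this
    omega
  obtain ⟨p, k₁, k₂, hk₁, hk₂, hfp, hgp⟩ :=
    Stmt17.exists_common_root (a + b) a b f g le_rfl ha hb hf hg hfu hgu hassoc
  -- unwrap the associations into scalar equalities
  obtain ⟨u₁, hu₁⟩ := hfp
  obtain ⟨u₂, hu₂⟩ := hgp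
  obtain ⟨d₁, hd₁0, hd₁⟩ := Stmt17.isUnit_iff_C.mp u₁⁻¹.isUnit
  obtain ⟨d₂, hd₂0, hd₂⟩ := Stmt17.isUnit_iff_C.mp u₂⁻¹.isUnit
  have hfeq : f = d₁ • p ^ k₁ := by
    have : f = p ^ k₁ * ↑u₁⁻¹ := by
      rw [← hu₁, mul_assoc, u₁.mul_inv, mul_one]
    rw [this, hd₁, MvPolynomial.smul_eq_C_mul, mul_comm]
  have hgeq : g = d₂ • p ^ k₂ := by
    have : g = p ^ k₂ * ↑u₂⁻¹ := by
      rw [← hu₂, mul_assoc, u₂.mul_inv, mul_one]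
    rw [this, hd₂, MvPolynomial.smul_eq_C_mul, mul_comm]
  -- p is nonzero
  have hp0 : p ≠ 0 := by
    intro hz
    rw [hz, zero_pow (by omega : k₁ ≠ 0), smul_zero] at hfeq
    exact hf hfeq
  -- p is homogeneous
  have hpk : (p ^ k₁).IsHomogeneous a := by
    have h1 : (C d₁⁻¹ * f).IsHomogeneous a := hfh.C_mul d₁⁻¹
    have h2 : C d₁⁻¹ * f = p ^ k₁ := by
      rw [hfeq, MvPolynomial.smul_eq_C_mul, ← mul_assoc, ← map_mul,
        inv_mul_cancel₀ hd₁0, map_one, one_mul]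
    rwa [h2] at h1
  have hph : p.IsHomogeneous p.totalDegree := by
    refine Stmt17.factor_isHomogeneous hp0 (pow_ne_zero (k₁ - 1) hp0) (N := a) ?_
    rw [show p * p ^ (k₁ - 1) = p ^ k₁ by rw [← pow_succ']; congr 1; omega]
    exact hpk
  exact ⟨p, p.totalDegree, d₁, d₂, k₁, k₂, hph, hd₁0, hd₂0, by omega, by omega, hfeq, hgeq⟩
end
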